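/- arXiv:2402.11299 — 8 statements merged into one kernel-verified Lean document; each statement's English description precedes it below -/
import Mathlib

section
/- Let m, n, p, ℓ, λ, μ be natural numbers and let A be a real symmetric positive definite matrix indexed by Fin m ⊕ (Fin p × Fin n) (a B³-Arrowhead matrix) satisfying: (i) A (inl i) (inl i') = 0 whenever |i − i'| > λ + μ; (ii) A (inl i) (inr (k,j)) = 0 whenever k ≥ ℓ, or i − j > λ, or j − i > μ; (iii) A (inr (k,j)) (inl i) = A (inl i) (inr (k,j)) (symmetry); (iv) A (inr (k,j)) (inr (k',j')) = 0 whenever j ≠ j' or |k − k'| > ℓ. Then there exists a matrix L indexed by Fin m ⊕ (Fin p × Fin n) such that A = Lᵀ L, L is lower triangular with respect to the order in which the Fin m indices come first (in their natural order) followed by the pairs (k,j) ordered lexicographically, and L has the sparsity: L (inl i) (inl i') = 0 whenever i − i' > λ + μ or i < i'; L (inl i) (inr (k,j)) = 0 for all i,k,j; L (inr (k,j)) (inl i) = 0 whenever k ≥ ℓ, or j − i > μ, or i − j > λ; and L (inr (k,j)) (inr (k',j')) = 0 unless j = j' and 0 ≤ k − k' ≤ ℓ. -/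
open Matrix

/-- The flattening of the block index set `Fin m ⊕ (Fin p × Fin n)` into `ℕ`, where the
`Fin m` indices come first (in natural order) followed by the pairs `(k, j)` ordered
lexicographically (block index `k` first, then the row `j` within the block). -/
def arrowheadOrder {m p n : ℕ} : Fin m ⊕ (Fin p × Fin n) → ℕ
  | .inl i => (i : ℕ)
  | .inr (k, j) => m + (k : ℕ) * n + (j : ℕ)

private lemma posdef_submatrix {α β : Type*} [Fintype α] [Fintype β]
    {A : Matrix α α ℝ} (hA : A.PosDef) (e : β ≃ α) : (A.submatrix e e).PosDef := by
  refine Matrix.PosDef.of_dotProduct_mulVec_pos (hA.1.submatrix e) ?_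
  intro x hx
  have hx' : x ∘ e.symm ≠ 0 := fun h => hx (funext fun b => by simpa using congrFun h (e b))
  have key : star x ⬝ᵥ (A.submatrix e e) *ᵥ x = star (x ∘ e.symm) ⬝ᵥ A *ᵥ (x ∘ e.symm) := by
    simp only [dotProduct, mulVec, submatrix_apply, Function.comp, Pi.star_apply]
    rw [← Equiv.sum_comp e (fun a => star (x (e.symm a)) * ∑ c, A a c * x (e.symm c))]
    refine Finset.sum_congr rfl fun b _ => ?_
    simp only [Equiv.symm_apply_apply]
    congr 1
    rw [← Equiv.sum_comp e (fun c => A (e b) c * x (e.symm c))]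
    exact Finset.sum_congr rfl fun c _ => by simp
  rw [key]
  exact hA.dotProduct_mulVec_pos hx'



private lemma posdef_diag {N : ℕ} {A : Matrix (Fin N) (Fin N) ℝ} (hA : A.PosDef) (i : Fin N) :
    0 < A i i := by
  have h := hA.dotProduct_mulVec_pos (x := Pi.single i 1) (by simp [funext_iff]; exact ⟨i, by simp⟩)
  simpa [dotProduct, mulVec, Pi.single_apply, Finset.mul_sum, mul_ite] using h

private lemma revCholesky : ∀ (N : ℕ) (A : Matrix (Fin N) (Fin N) ℝ), A.PosDef →
    ∀ (Z : Fin N → Fin N → Prop), (∀ r c, Z r c → Z c r) →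
    (∀ r c, Z r c → A r c = 0) →
    (∀ r c t, Z r c → r < t → c < t → Z r t ∨ Z c t) →
    ∃ L : Matrix (Fin N) (Fin N) ℝ,
      A = Lᵀ * L ∧ (∀ r c, r < c → L r c = 0) ∧ (∀ r c, Z r c → L r c = 0) := by
  intro N
  induction N with
  | zero =>
    intro A _ Z _ _ _
    exact ⟨0, by ext i j; exact i.elim0, fun r c _ => r.elim0, fun r c _ => r.elim0⟩
  | succ N ih =>
    intro A hA Z hZs hAZ hcl
    have hsymm : ∀ r c, A r c = A c r := fun r c => (hA.1.apply r c).symm.trans (by simp)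
    set d : ℝ := A (Fin.last N) (Fin.last N) with hd
    have hd0 : 0 < d := posdef_diag hA _
    set s : ℝ := Real.sqrt d with hs
    have hs0 : 0 < s := Real.sqrt_pos.mpr hd0
    have hss : s * s = d := Real.mul_self_sqrt hd0.le
    set v : Fin N → ℝ := fun c => A (Fin.last N) c.castSucc with hv
    set A' : Matrix (Fin N) (Fin N) ℝ :=
      Matrix.of (fun r c => A r.castSucc c.castSucc - v r * v c / d) with hA'def
    have hA'app : ∀ r c, A' r c = A r.castSucc c.castSucc - v r * v c / d := fun r c => rfl
    -- the quadratic-form identity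
    have key : ∀ x : Fin N → ℝ,
        x ⬝ᵥ A' *ᵥ x =
          (Fin.snoc x (-(∑ c, v c * x c) / d) : Fin (N+1) → ℝ) ⬝ᵥ
            A *ᵥ (Fin.snoc x (-(∑ c, v c * x c) / d)) := by
      intro x
      set w : ℝ := ∑ c, v c * x c with hw
      set a : ℝ := -w / d with ha
      set y : Fin (N+1) → ℝ := Fin.snoc x a with hy
      have e1 : ∀ r' : Fin N, (A *ᵥ y) r'.castSucc
          = (∑ c', A r'.castSucc c'.castSucc * x c') + v r' * a := by
        intro r'
        simp only [mulVec, dotProduct, Fin.sum_univ_castSucc, hy, Fin.snoc_castSucc,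
          Fin.snoc_last]
        rw [hsymm r'.castSucc (Fin.last N)]
      have e2 : (A *ᵥ y) (Fin.last N) = w + d * a := by
        simp only [mulVec, dotProduct, Fin.sum_univ_castSucc, hy, Fin.snoc_castSucc,
          Fin.snoc_last, hw]
        rfl
      have hxv : ∑ r', x r' * v r' = w := by
        rw [hw]; exact Finset.sum_congr rfl fun i _ => mul_comm _ _
      have RHS : y ⬝ᵥ A *ᵥ y
          = (∑ r', x r' * ∑ c', A r'.castSucc c'.castSucc * x c') + w * a + a * (w + d * a) := by
        simp only [dotProduct, Fin.sum_univ_castSucc, hy, Fin.snoc_castSucc, Fin.snoc_last]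
        rw [← hy]
        rw [e2]
        rw [Finset.sum_congr rfl (fun r' _ => by rw [e1 r'])]
        simp only [mul_add, Finset.sum_add_distrib]
        rw [show (∑ r', x r' * (v r' * a)) = (∑ r', x r' * v r') * a by
          rw [Finset.sum_mul]; exact Finset.sum_congr rfl fun i _ => (mul_assoc _ _ _).symm]
        rw [hxv]
      have LHS : x ⬝ᵥ A' *ᵥ x
          = (∑ r', x r' * ∑ c', A r'.castSucc c'.castSucc * x c') - w * w / d := by
        simp only [mulVec, dotProduct, hA'app, sub_mul, Finset.sum_sub_distrib, mul_sub]
        congr 1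
        have step1 : ∀ r' : Fin N, (∑ c', v r' * v c' / d * x c') = v r' * w / d := by
          intro r'
          rw [hw, Finset.mul_sum, Finset.sum_div]
          exact Finset.sum_congr rfl fun c' _ => by ring
        rw [Finset.sum_congr rfl fun r' _ => by rw [step1 r']]
        calc (∑ r', x r' * (v r' * w / d)) = (∑ r', x r' * v r') * w / d := by
              rw [Finset.sum_mul, Finset.sum_div]
              exact Finset.sum_congr rfl fun r' _ => by ring
          _ = w * w / d := by rw [hxv]
      rw [LHS, RHS, ha]
      field_simp
      ring
    -- A' is positive definite
    have hA'pd : A'.PosDef := by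
      refine Matrix.PosDef.of_dotProduct_mulVec_pos ?_ ?_
      · show A'ᴴ = A'
        ext r c
        simp only [conjTranspose_apply, hA'app, star_trivial]
        rw [hsymm c.castSucc r.castSucc]; ring
      · intro x hx
        have hy0 : (Fin.snoc x (-(∑ c, v c * x c) / d) : Fin (N+1) → ℝ) ≠ 0 := by
          intro h
          apply hx
          funext i
          have := congrFun h i.castSucc
          simpa [Fin.snoc_castSucc] using this
        have := hA.dotProduct_mulVec_pos hy0
        simpa [key x] using this
    -- transported pattern on Fin N
    have hA'Z : ∀ r c, Z r.castSucc c.castSucc → A' r c = 0 := by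
      intro r c hz
      have h1 : A r.castSucc c.castSucc = 0 := hAZ _ _ hz
      have h2 : v r = 0 ∨ v c = 0 := by
        rcases hcl r.castSucc c.castSucc (Fin.last N) hz (Fin.castSucc_lt_last r)
          (Fin.castSucc_lt_last c) with h | h
        · left; show A (Fin.last N) r.castSucc = 0; rw [hsymm]; exact hAZ _ _ h
        · right; show A (Fin.last N) c.castSucc = 0; rw [hsymm]; exact hAZ _ _ h
      rcases h2 with h2 | h2 <;> simp [hA'app, h1, h2]
    obtain ⟨L', hfac', htri', hZ0'⟩ := ih A' hA'pd (fun r c => Z r.castSucc c.castSucc)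
      (fun r c h => hZs _ _ h) hA'Z
      (fun r c t hz hrt hct => hcl _ _ _ hz
        (Fin.castSucc_lt_castSucc_iff.mpr hrt) (Fin.castSucc_lt_castSucc_iff.mpr hct))
    set L : Matrix (Fin (N+1)) (Fin (N+1)) ℝ :=
      Matrix.of (Fin.lastCases (motive := fun _ => Fin (N+1) → ℝ)
        (Fin.lastCases (motive := fun _ => ℝ) s (fun c' => v c' / s))
        (fun r' => Fin.lastCases (motive := fun _ => ℝ) 0 (fun c' => L' r' c'))) with hL
    have Lll : L (Fin.last N) (Fin.last N) = s := by simp [hL]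
    have Llc : ∀ c' : Fin N, L (Fin.last N) c'.castSucc = v c' / s := by intro c'; simp [hL]
    have Lcl : ∀ r' : Fin N, L r'.castSucc (Fin.last N) = 0 := by intro r'; simp [hL]
    have Lcc : ∀ r' c' : Fin N, L r'.castSucc c'.castSucc = L' r' c' := by intro r' c'; simp [hL]
    have hA'eq : ∀ r' c' : Fin N, A' r' c' = ∑ t', L' t' r' * L' t' c' := by
      intro r' c'
      have := congrFun (congrFun hfac' r') c'
      simpa [mul_apply, transpose_apply] using this
    refine ⟨L, ?_, ?_, ?_⟩
    · ext r c
      rw [mul_apply]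
      simp only [transpose_apply]
      rw [Fin.sum_univ_castSucc]
      induction r using Fin.lastCases with
      | last =>
        induction c using Fin.lastCases with
        | last =>
          simp only [Lll, Lcl, zero_mul, mul_zero, Finset.sum_const_zero, zero_add]
          exact hss.symm
        | cast c' =>
          simp only [Lll, Llc, Lcl, Lcc, zero_mul, Finset.sum_const_zero, zero_add]
          rw [mul_comm, div_mul_cancel₀ _ hs0.ne']
      | cast r' =>
        induction c using Fin.lastCases with
        | last =>
          simp only [Lll, Llc, Lcl, Lcc, mul_zero, Finset.sum_const_zero, zero_add]
          rw [div_mul_cancel₀ _ hs0.ne']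
          exact hsymm r'.castSucc (Fin.last N)
        | cast c' =>
          simp only [Llc, Lcc]
          rw [← hA'eq, hA'app, div_mul_div_comm, hss]
          ring
    · intro r c hrc
      induction r using Fin.lastCases with
      | last =>
        exact absurd hrc (by simpa using (Fin.le_last c).not_gt)
      | cast r' =>
        induction c using Fin.lastCases with
        | last => exact Lcl r'
        | cast c' => rw [Lcc]; exact htri' _ _ (Fin.castSucc_lt_castSucc_iff.mp hrc)
    · intro r c hz
      induction r using Fin.lastCases with
      | last =>
        induction c using Fin.lastCases with
        | last => exact absurd (hAZ _ _ hz) hd0.ne'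
        | cast c' =>
          rw [Llc]
          have hvc : v c' = 0 := hAZ _ _ hz
          rw [hvc]; simp
      | cast r' =>
        induction c using Fin.lastCases with
        | last => exact Lcl r'
        | cast c' => rw [Lcc]; exact hZ0' _ _ hz

private def ZArrow (m n p ℓ lam mu : ℕ) :
    (Fin m ⊕ (Fin p × Fin n)) → (Fin m ⊕ (Fin p × Fin n)) → Prop
  | .inl i, .inl i' => (i' : ℕ) + (lam + mu) < (i : ℕ) ∨ (i : ℕ) + (lam + mu) < (i' : ℕ)
  | .inl i, .inr (k, j) => ℓ ≤ (k : ℕ) ∨ (j : ℕ) + lam < (i : ℕ) ∨ (i : ℕ) + mu < (j : ℕ)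
  | .inr (k, j), .inl i => ℓ ≤ (k : ℕ) ∨ (j : ℕ) + lam < (i : ℕ) ∨ (i : ℕ) + mu < (j : ℕ)
  | .inr (k, j), .inr (k', j') => j ≠ j' ∨ (k' : ℕ) + ℓ < (k : ℕ) ∨ (k : ℕ) + ℓ < (k' : ℕ)

private lemma block_lt {n k k₂ j j₂ : ℕ} (hje : j₂ ≤ j) (h : k * n + j < k₂ * n + j₂) :
    k < k₂ := by
  have h2 : k * n < k₂ * n := by omega
  exact lt_of_mul_lt_mul_right h2 (Nat.zero_le n)

private lemma ZArrow_symm (m n p ℓ lam mu : ℕ) :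
    ∀ x y, ZArrow m n p ℓ lam mu x y → ZArrow m n p ℓ lam mu y x := by
  rintro (i | ⟨k, j⟩) (i' | ⟨k', j'⟩) hz <;> simp only [ZArrow] at *
  · omega
  · exact hz
  · exact hz
  · rcases hz with h | h | h
    · exact Or.inl (Ne.symm h)
    · exact Or.inr (Or.inr h)
    · exact Or.inr (Or.inl h)

private lemma ZArrow_closed (m n p ℓ lam mu : ℕ) :
    ∀ x y t, ZArrow m n p ℓ lam mu x y →
      arrowheadOrder x < arrowheadOrder t → arrowheadOrder y < arrowheadOrder t →
      ZArrow m n p ℓ lam mu x t ∨ ZArrow m n p ℓ lam mu y t := by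
  rintro (i | ⟨k, j⟩) (i' | ⟨k', j'⟩) (s | ⟨k₂, j₂⟩) hz hxt hyt <;>
    simp only [ZArrow, arrowheadOrder] at *
  · omega
  · omega
  · exact absurd hyt (by have := s.isLt; omega)
  · by_cases hj : j' = j₂
    · have hjv : (j' : ℕ) = (j₂ : ℕ) := congrArg Fin.val hj
      have hk : (k' : ℕ) < (k₂ : ℕ) := block_lt (n := n) (le_of_eq hjv.symm) (by omega)
      left; omega
    · exact Or.inr (Or.inl hj)
  · exact absurd hxt (by have := s.isLt; omega)
  · by_cases hj : j = j₂
    · have hjv : (j : ℕ) = (j₂ : ℕ) := congrArg Fin.val hj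
      have hk : (k : ℕ) < (k₂ : ℕ) := block_lt (n := n) (le_of_eq hjv.symm) (by omega)
      right; omega
    · exact Or.inl (Or.inl hj)
  · exact absurd hxt (by have := s.isLt; omega)
  · by_cases hj : j = j₂
    · by_cases hj' : j' = j₂
      · have hjv : (j : ℕ) = (j₂ : ℕ) := congrArg Fin.val hj
        have hjv' : (j' : ℕ) = (j₂ : ℕ) := congrArg Fin.val hj'
        have hk : (k : ℕ) < (k₂ : ℕ) := block_lt (n := n) (le_of_eq hjv.symm) (by omega)
        have hk' : (k' : ℕ) < (k₂ : ℕ) := block_lt (n := n) (le_of_eq hjv'.symm) (by omega)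
        rcases hz with h | h | h
        · exact absurd (hj.trans hj'.symm) h
        · exact Or.inr (Or.inr (Or.inr (by omega)))
        · exact Or.inl (Or.inr (Or.inr (by omega)))
      · exact Or.inr (Or.inl hj')
    · exact Or.inl (Or.inl hj)

private lemma arrow_equiv_val (m p n : ℕ) (x : Fin m ⊕ (Fin p × Fin n)) :
    ((((Equiv.sumCongr (Equiv.refl (Fin m)) finProdFinEquiv).trans finSumFinEquiv) x
      : Fin (m + p * n)) : ℕ) = arrowheadOrder x := by
  rcases x with i | ⟨k, j⟩
  · simp [arrowheadOrder]
  · simp [arrowheadOrder, finProdFinEquiv_apply_val]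
    ring

/-- A symmetric positive definite B³-Arrowhead matrix with block-bandwidths
`(ℓ, ℓ)` and sub-block bandwidths built from `(λ, μ)` admits a reverse Cholesky
factorisation `A = Lᵀ L` with `L` a lower triangular B³-Arrowhead matrix with the
prescribed sparsity. -/
theorem b3arrowhead_reverse_cholesky (m n p ℓ lam mu : ℕ)
    (A : Matrix (Fin m ⊕ (Fin p × Fin n)) (Fin m ⊕ (Fin p × Fin n)) ℝ)
    (hA : A.PosDef)
    (h1 : ∀ i i' : Fin m,
      ((i' : ℕ) + (lam + mu) < (i : ℕ) ∨ (i : ℕ) + (lam + mu) < (i' : ℕ)) →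
        A (.inl i) (.inl i') = 0)
    (h2 : ∀ (i : Fin m) (k : Fin p) (j : Fin n),
      (ℓ ≤ (k : ℕ) ∨ (j : ℕ) + lam < (i : ℕ) ∨ (i : ℕ) + mu < (j : ℕ)) →
        A (.inl i) (.inr (k, j)) = 0)
    (h3 : ∀ (i : Fin m) (k : Fin p) (j : Fin n),
      A (.inr (k, j)) (.inl i) = A (.inl i) (.inr (k, j)))
    (h4 : ∀ (k k' : Fin p) (j j' : Fin n),
      (j ≠ j' ∨ (k' : ℕ) + ℓ < (k : ℕ) ∨ (k : ℕ) + ℓ < (k' : ℕ)) →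
        A (.inr (k, j)) (.inr (k', j')) = 0) :
    ∃ L : Matrix (Fin m ⊕ (Fin p × Fin n)) (Fin m ⊕ (Fin p × Fin n)) ℝ,
      A = Lᵀ * L ∧
      -- L is lower triangular with respect to the described ordering
      (∀ r c : Fin m ⊕ (Fin p × Fin n), arrowheadOrder r < arrowheadOrder c → L r c = 0) ∧
      -- sparsity of the leading block
      (∀ i i' : Fin m, ((i' : ℕ) + (lam + mu) < (i : ℕ) ∨ (i : ℕ) < (i' : ℕ)) →
        L (.inl i) (.inl i') = 0) ∧
      -- the top-right blocks vanish
      (∀ (i : Fin m) (k : Fin p) (j : Fin n), L (.inl i) (.inr (k, j)) = 0) ∧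
      -- sparsity of the first-column blocks
      (∀ (i : Fin m) (k : Fin p) (j : Fin n),
        (ℓ ≤ (k : ℕ) ∨ (i : ℕ) + mu < (j : ℕ) ∨ (j : ℕ) + lam < (i : ℕ)) →
          L (.inr (k, j)) (.inl i) = 0) ∧
      -- the remaining blocks are diagonal and below the block diagonal within distance ℓ
      (∀ (k k' : Fin p) (j j' : Fin n),
        ¬(j = j' ∧ (k' : ℕ) ≤ (k : ℕ) ∧ (k : ℕ) ≤ (k' : ℕ) + ℓ) →
          L (.inr (k, j)) (.inr (k', j')) = 0) := by
  classical
  set e : (Fin m ⊕ (Fin p × Fin n)) ≃ Fin (m + p * n) :=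
    (Equiv.sumCongr (Equiv.refl (Fin m)) finProdFinEquiv).trans finSumFinEquiv with he
  have heval : ∀ x, ((e x : Fin (m + p * n)) : ℕ) = arrowheadOrder x := arrow_equiv_val m p n
  have hesymm : ∀ r : Fin (m + p * n), arrowheadOrder (e.symm r) = (r : ℕ) := fun r => by
    rw [← heval (e.symm r), Equiv.apply_symm_apply]
  have hBpd : (A.submatrix e.symm e.symm).PosDef := posdef_submatrix hA e.symm
  have hAZ : ∀ x y, ZArrow m n p ℓ lam mu x y → A x y = 0 := by
    rintro (i | ⟨k, j⟩) (i' | ⟨k', j'⟩) hz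
    · exact h1 _ _ hz
    · exact h2 _ _ _ hz
    · rw [h3]; exact h2 _ _ _ hz
    · exact h4 _ _ _ _ hz
  obtain ⟨LB, hfac, htri, hZ0⟩ := revCholesky (m + p * n) (A.submatrix e.symm e.symm) hBpd
    (fun r c => ZArrow m n p ℓ lam mu (e.symm r) (e.symm c))
    (fun r c h => ZArrow_symm m n p ℓ lam mu _ _ h)
    (fun r c h => hAZ _ _ h)
    (fun r c t h hrt hct => ZArrow_closed m n p ℓ lam mu _ _ _ h
      (by rw [hesymm, hesymm]; exact hrt) (by rw [hesymm, hesymm]; exact hct))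
  have htri' : ∀ x y, arrowheadOrder x < arrowheadOrder y → (LB.submatrix e e) x y = 0 := by
    intro x y h
    exact htri (e x) (e y) (by rw [Fin.lt_def, heval, heval]; exact h)
  have hZ0' : ∀ x y, ZArrow m n p ℓ lam mu x y → (LB.submatrix e e) x y = 0 := by
    intro x y h
    exact hZ0 (e x) (e y) (by rw [Equiv.symm_apply_apply, Equiv.symm_apply_apply]; exact h)
  refine ⟨LB.submatrix e e, ?_, htri', ?_, ?_, ?_, ?_⟩
  · have h5 : (LB.submatrix e e)ᵀ * (LB.submatrix e e) = (LBᵀ * LB).submatrix e e := by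
      rw [transpose_submatrix, submatrix_mul_equiv]
    rw [h5, ← hfac, submatrix_submatrix, Equiv.symm_comp_self, submatrix_id_id]
  · intro i i' h
    rcases h with h | h
    · exact hZ0' _ _ (Or.inl h)
    · exact htri' _ _ (by simpa [arrowheadOrder] using h)
  · intro i k j
    refine htri' _ _ ?_
    simp only [arrowheadOrder]
    have := i.isLt
    omega
  · intro i k j h
    refine hZ0' _ _ ?_
    rcases h with h | h | h
    · exact Or.inl h
    · exact Or.inr (Or.inr h)
    · exact Or.inr (Or.inl h)
  · intro k k' j j' h
    by_cases hj : j = j'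
    · by_cases hkk : (k : ℕ) < (k' : ℕ)
      · refine htri' _ _ ?_
        simp only [arrowheadOrder]
        have hjv : (j : ℕ) = (j' : ℕ) := congrArg Fin.val hj
        have hn : (k : ℕ) * n < (k' : ℕ) * n :=
          (Nat.mul_lt_mul_right j.pos).mpr hkk
        omega
      · have hk2 : (k' : ℕ) + ℓ < (k : ℕ) := by
          have h2 : ¬((k' : ℕ) ≤ (k : ℕ) ∧ (k : ℕ) ≤ (k' : ℕ) + ℓ) :=
            fun h2 => h ⟨hj, h2.1, h2.2⟩
          omega
        exact hZ0' _ _ (Or.inr (Or.inl hk2))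
    · exact hZ0' _ _ (Or.inl hj)
end

section
/- Let A be a real n×n symmetric positive definite matrix with A i j = 0 whenever |i − j| > b. Then there exists a unique lower triangular matrix L with strictly positive diagonal entries such that A = Lᵀ L (the reverse Cholesky factorisation), and this L satisfies L i j = 0 whenever i − j > b. -/
open Matrix

private lemma chol_exists {n : ℕ} (A : Matrix (Fin n) (Fin n) ℝ) (hA : A.PosDef) :
    ∃ C : Matrix (Fin n) (Fin n) ℝ,
      (∀ i j, i < j → C i j = 0) ∧ (∀ i, 0 < C i i) ∧ A = C * Cᵀ := by
  haveI : WellFoundedLT (Fin n) := inferInstance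
  letI : DecidableEq (Fin n) := fun a b => instDecidableEqFin n a b
  haveI := LDL.invertibleLowerInv hA
  set lo := LDL.lower hA with hlo
  set d := LDL.diagEntries hA with hd
  have hfact : lo * LDL.diag hA * loᴴ = A := LDL.lower_conj_diag hA
  have hdiagd : LDL.diag hA = diagonal d := rfl
  have hLI : (LDL.lowerInv hA).BlockTriangular OrderDual.toDual :=
    fun i j hij => LDL.lowerInv_triangular hA hij
  have hloT : lo.BlockTriangular OrderDual.toDual := by
    rw [hlo]; delta LDL.lower
    exact blockTriangular_inv_of_blockTriangular hLI
  have hlo_tri : ∀ i j : Fin n, i < j → lo i j = 0 := fun i j hij => hloT hij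
  have hdnn : ∀ i, 0 ≤ d i := by
    have hps : (LDL.diag hA).PosSemidef := by
      rw [LDL.diag_eq_lowerInv_conj hA]
      exact hA.posSemidef.mul_mul_conjTranspose_same _
    rw [hdiagd] at hps
    exact posSemidef_diagonal_iff.mp hps
  set C₀ : Matrix (Fin n) (Fin n) ℝ := lo * diagonal (fun i => Real.sqrt (d i)) with hC₀
  have hC₀app : ∀ i j, C₀ i j = lo i j * Real.sqrt (d j) := by
    intro i j; rw [hC₀, mul_diagonal]
  have hC₀tri : ∀ i j : Fin n, i < j → C₀ i j = 0 := by
    intro i j hij; rw [hC₀app, hlo_tri i j hij, zero_mul]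
  have hfact₀ : A = C₀ * C₀ᵀ := by
    rw [hC₀, transpose_mul, diagonal_transpose, ← Matrix.mul_assoc, Matrix.mul_assoc lo,
      diagonal_mul_diagonal]
    have h1 : (fun i => Real.sqrt (d i) * Real.sqrt (d i)) = d := by
      funext i; exact Real.mul_self_sqrt (hdnn i)
    rw [h1, ← hfact, hdiagd]
    have h2 : loᴴ = loᵀ := by ext i j; simp [conjTranspose_apply]
    rw [h2, Matrix.mul_assoc]
  have hdet : det A = (∏ i, C₀ i i) * (∏ i, C₀ i i) := by
    rw [hfact₀, det_mul, det_transpose, det_of_lowerTriangular C₀ (fun i j hij => hC₀tri i j hij)]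
  have hne : ∀ i, C₀ i i ≠ 0 := by
    intro i hzero
    have : det A = 0 := by
      rw [hdet]
      exact mul_eq_zero_of_left
        (Finset.prod_eq_zero (Finset.mem_univ i) (f := fun k => C₀ k k) hzero) _
    exact hA.det_pos.ne' this
  set s : Fin n → ℝ := fun i => if 0 < C₀ i i then 1 else -1 with hs
  have hss : ∀ i, s i * s i = 1 := by
    intro i; rw [hs]; by_cases h : 0 < C₀ i i <;> simp [h]
  refine ⟨C₀ * diagonal s, ?_, ?_, ?_⟩
  · intro i j hij; rw [mul_diagonal, hC₀tri i j hij, zero_mul]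
  · intro i
    rw [mul_diagonal, hs]
    by_cases h : 0 < C₀ i i
    · simp [h]
    · simp only [h, if_false, mul_neg_one]
      have : C₀ i i < 0 := lt_of_le_of_ne (not_lt.mp h) (hne i)
      linarith
  · rw [transpose_mul, diagonal_transpose, ← Matrix.mul_assoc, Matrix.mul_assoc C₀,
      diagonal_mul_diagonal]
    have h1 : (fun i => s i * s i) = fun _ => (1:ℝ) := funext hss
    rw [h1, diagonal_one, Matrix.mul_one, hfact₀]

private lemma chol_band {n b : ℕ} (A C : Matrix (Fin n) (Fin n) ℝ)
    (hC : ∀ i j : Fin n, i < j → C i j = 0) (hd : ∀ i, 0 < C i i) (hfact : A = C * Cᵀ)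
    (hband : ∀ i j : Fin n, (j : ℕ) + b < (i : ℕ) → A i j = 0) :
    ∀ i j : Fin n, (j : ℕ) + b < (i : ℕ) → C i j = 0 := by
  have key : ∀ m : ℕ, ∀ j i : Fin n, (j : ℕ) = m → (j : ℕ) + b < (i : ℕ) → C i j = 0 := by
    intro m
    induction m using Nat.strong_induction_on with
    | _ m IH =>
      intro j i hjm hlt
      have hsum : A i j = ∑ k, C i k * C j k := by
        rw [hfact, Matrix.mul_apply]
        simp [Matrix.transpose_apply]
      have hone : ∑ k, C i k * C j k = C i j * C j j := by
        apply Finset.sum_eq_single j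
        · intro k _ hk
          rcases lt_or_gt_of_ne hk with h | h
          · have hk0 : C i k = 0 := by
              refine IH (k : ℕ) ?_ k i rfl ?_
              · omega
              · have : (k : ℕ) < (j : ℕ) := h
                omega
            rw [hk0, zero_mul]
          · rw [hC j k h, mul_zero]
        · intro h; exact absurd (Finset.mem_univ j) h
      have h0 : C i j * C j j = 0 := by rw [← hone, ← hsum]; exact hband i j hlt
      rcases mul_eq_zero.mp h0 with h | h
      · exact h
      · exact absurd h (hd j).ne'
  intro i j hlt
  exact key (j : ℕ) j i rfl hlt

private lemma chol_uniq {n : ℕ} (A C₁ C₂ : Matrix (Fin n) (Fin n) ℝ)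
    (h1 : ∀ i j : Fin n, i < j → C₁ i j = 0) (hd1 : ∀ i, 0 < C₁ i i) (hf1 : A = C₁ * C₁ᵀ)
    (h2 : ∀ i j : Fin n, i < j → C₂ i j = 0) (hd2 : ∀ i, 0 < C₂ i i) (hf2 : A = C₂ * C₂ᵀ) :
    C₁ = C₂ := by
  have key : ∀ m : ℕ, ∀ j : Fin n, (j : ℕ) = m → ∀ i, C₁ i j = C₂ i j := by
    intro m
    induction m using Nat.strong_induction_on with
    | _ m IH =>
      intro j hjm
      have hsum1 : ∀ i, A i j = C₁ i j * C₁ j j + ∑ k ∈ Finset.univ.erase j, C₁ i k * C₁ j k := by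
        intro i
        rw [hf1, Matrix.mul_apply]
        simp only [Matrix.transpose_apply]
        rw [← Finset.add_sum_erase _ _ (Finset.mem_univ j)]
      have hsum2 : ∀ i, A i j = C₂ i j * C₂ j j + ∑ k ∈ Finset.univ.erase j, C₂ i k * C₂ j k := by
        intro i
        rw [hf2, Matrix.mul_apply]
        simp only [Matrix.transpose_apply]
        rw [← Finset.add_sum_erase _ _ (Finset.mem_univ j)]
      -- the erased sums agree for any rows i₁ (using IH on columns < j, triangularity above j)
      have hrest : ∀ i, ∑ k ∈ Finset.univ.erase j, C₁ i k * C₁ j k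
          = ∑ k ∈ Finset.univ.erase j, C₂ i k * C₂ j k := by
        intro i
        apply Finset.sum_congr rfl
        intro k hk
        have hkj : k ≠ j := Finset.ne_of_mem_erase hk
        rcases lt_or_gt_of_ne hkj with h | h
        · have e1 := IH (k : ℕ) (by have : (k:ℕ) < (j:ℕ) := h; omega) k rfl
          rw [e1 i, e1 j]
        · rw [h1 j k h, h2 j k h, mul_zero, mul_zero]
      -- diagonal entries agree
      have hdiag : C₁ j j = C₂ j j := by
        have e := (hsum1 j).symm.trans (hsum2 j)
        rw [hrest j] at e
        have e2 : C₁ j j * C₁ j j = C₂ j j * C₂ j j := by linarith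
        have e3 : (C₁ j j - C₂ j j) * (C₁ j j + C₂ j j) = 0 := by ring_nf; linarith [e2]
        rcases mul_eq_zero.mp e3 with h | h
        · linarith
        · have := hd1 j; have := hd2 j; linarith
      intro i
      rcases lt_trichotomy i j with hij | hij | hij
      · rw [h1 i j hij, h2 i j hij]
      · rw [hij, hdiag]
      · have e := (hsum1 i).symm.trans (hsum2 i)
        rw [hrest i] at e
        have e2 : C₁ i j * C₁ j j = C₂ i j * C₁ j j := by rw [hdiag] at *; linarith
        exact mul_right_cancel₀ (hd1 j).ne' e2
  ext i j
  exact key (j : ℕ) j rfl i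

private lemma posDef_submatrix_rev {n : ℕ} {A : Matrix (Fin n) (Fin n) ℝ} (hA : A.PosDef) :
    (A.submatrix Fin.rev Fin.rev).PosDef := by
  have hsym : ∀ p q, A p q = A q p := by
    intro p q
    have := congrFun (congrFun hA.1 p) q
    simpa [Matrix.conjTranspose_apply] using this.symm
  refine Matrix.PosDef.of_dotProduct_mulVec_pos ?_ ?_
  · ext p q
    simp only [Matrix.conjTranspose_apply, Matrix.submatrix_apply, star_trivial]
    exact hsym q.rev p.rev
  · intro x hx
    have hx' : (fun i => x (Fin.rev i)) ≠ 0 := by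
      intro h
      apply hx
      ext i
      have := congrFun h (Fin.rev i)
      simpa [Fin.rev_rev] using this
    have hpos := hA.dotProduct_mulVec_pos hx'
    convert hpos using 1
    simp only [dotProduct, Matrix.mulVec, Pi.star_apply, star_trivial,
      Matrix.submatrix_apply]
    rw [← Equiv.sum_comp (Fin.revPerm (n := n))
      (fun p => x (Fin.rev p) * ∑ q, A p q * x (Fin.rev q))]
    apply Finset.sum_congr rfl
    intro p _
    simp only [Fin.revPerm_apply, Fin.rev_rev]
    congr 1
    rw [← Equiv.sum_comp (Fin.revPerm (n := n)) (fun q => A (Fin.rev p) q * x (Fin.rev q))]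
    apply Finset.sum_congr rfl
    intro q _
    simp [Fin.rev_rev]

/-- A symmetric positive definite banded matrix has a unique reverse
Cholesky factorisation `A = Lᵀ L` with `L` lower triangular with strictly positive
diagonal, and this `L` inherits the lower bandwidth `b`. -/
theorem banded_reverse_cholesky (n b : ℕ) (A : Matrix (Fin n) (Fin n) ℝ)
    (hA : A.PosDef)
    (hband : ∀ i j : Fin n, ((j : ℕ) + b < (i : ℕ) ∨ (i : ℕ) + b < (j : ℕ)) → A i j = 0) :
    (∃! L : Matrix (Fin n) (Fin n) ℝ,
      (∀ i j : Fin n, i < j → L i j = 0) ∧ (∀ i : Fin n, 0 < L i i) ∧ A = Lᵀ * L) ∧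
    (∀ L : Matrix (Fin n) (Fin n) ℝ,
      ((∀ i j : Fin n, i < j → L i j = 0) ∧ (∀ i : Fin n, 0 < L i i) ∧ A = Lᵀ * L) →
        ∀ i j : Fin n, (j : ℕ) + b < (i : ℕ) → L i j = 0) := by
  -- the flipped matrix
  set B : Matrix (Fin n) (Fin n) ℝ := A.submatrix Fin.rev Fin.rev with hB
  have hBpd : B.PosDef := posDef_submatrix_rev hA
  obtain ⟨C, hCtri, hCd, hCf⟩ := chol_exists B hBpd
  -- transfer any reverse factor of A to a standard factor of B
  have transfer : ∀ L : Matrix (Fin n) (Fin n) ℝ,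
      ((∀ i j : Fin n, i < j → L i j = 0) ∧ (∀ i : Fin n, 0 < L i i) ∧ A = Lᵀ * L) →
      (∀ i j : Fin n, i < j → (Matrix.of fun p q : Fin n => L q.rev p.rev) i j = 0) ∧
      (∀ i : Fin n, 0 < (Matrix.of fun p q : Fin n => L q.rev p.rev) i i) ∧
      B = (Matrix.of fun p q : Fin n => L q.rev p.rev) *
          (Matrix.of fun p q : Fin n => L q.rev p.rev)ᵀ := by
    rintro L ⟨hLtri, hLd, hLf⟩
    refine ⟨?_, ?_, ?_⟩
    · intro p q hpq
      exact hLtri q.rev p.rev (Fin.rev_lt_rev.mpr hpq)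
    · intro p
      exact hLd p.rev
    · ext p q
      rw [hB, Matrix.submatrix_apply, hLf, Matrix.mul_apply, Matrix.mul_apply]
      simp only [Matrix.transpose_apply]
      rw [← Equiv.sum_comp (Fin.revPerm (n := n)) (fun k => L k p.rev * L k q.rev)]
      apply Finset.sum_congr rfl
      intro k _
      simp [Fin.rev_rev]
  -- the reverse factor built from C
  set L₀ : Matrix (Fin n) (Fin n) ℝ := fun k i => C i.rev k.rev with hL₀
  have hL₀prop : (∀ i j : Fin n, i < j → L₀ i j = 0) ∧ (∀ i : Fin n, 0 < L₀ i i) ∧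
      A = L₀ᵀ * L₀ := by
    refine ⟨?_, ?_, ?_⟩
    · intro i j hij
      exact hCtri j.rev i.rev (Fin.rev_lt_rev.mpr hij)
    · intro i
      exact hCd i.rev
    · ext i j
      have hBij : B i.rev j.rev = A i j := by
        rw [hB, Matrix.submatrix_apply, Fin.rev_rev, Fin.rev_rev]
      rw [← hBij, hCf, Matrix.mul_apply, Matrix.mul_apply]
      simp only [Matrix.transpose_apply, hL₀]
      rw [← Equiv.sum_comp (Fin.revPerm (n := n)) (fun k => C i.rev k * C j.rev k)]
      apply Finset.sum_congr rfl
      intro k _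
      simp [Fin.rev_rev]
      exact Or.inl rfl
  -- uniqueness of reverse factor
  have huniq : ∀ L : Matrix (Fin n) (Fin n) ℝ,
      ((∀ i j : Fin n, i < j → L i j = 0) ∧ (∀ i : Fin n, 0 < L i i) ∧ A = Lᵀ * L) → L = L₀ := by
    intro L hL
    obtain ⟨t1, t2, t3⟩ := transfer L hL
    obtain ⟨s1, s2, s3⟩ := transfer L₀ hL₀prop
    have : (Matrix.of fun p q : Fin n => L q.rev p.rev) = Matrix.of fun p q : Fin n => L₀ q.rev p.rev :=
      chol_uniq B _ _ t1 t2 t3 s1 s2 s3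
    ext k i
    have := congrFun (congrFun this i.rev) k.rev
    simpa [Fin.rev_rev] using this
  constructor
  · exact ⟨L₀, hL₀prop, huniq⟩
  · intro L hL i j hij
    obtain ⟨t1, t2, t3⟩ := transfer L hL
    have hBband : ∀ p q : Fin n, (q : ℕ) + b < (p : ℕ) → B p q = 0 := by
      intro p q h
      rw [hB, Matrix.submatrix_apply]
      apply hband
      right
      have hp := p.is_lt
      have hq := q.is_lt
      rw [Fin.val_rev, Fin.val_rev]
      omega
    have hCband := chol_band B _ t1 t2 t3 hBband
    have : L i j = (Matrix.of fun p q : Fin n => L q.rev p.rev) j.rev i.rev := by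
      simp [Fin.rev_rev]
    rw [this]
    apply hCband
    have hi := i.is_lt
    have hj := j.is_lt
    rw [Fin.val_rev, Fin.val_rev]
    omega
end

section
/- Let A, D be real M×M matrices and B, C real N×N matrices with C = LᵀL and D = VᵀV for invertible L, V, and let F be a real M×N matrix. Set à = V⁻ᵀ A V⁻¹, B̃ = L⁻ᵀ B L⁻¹, G = V⁻ᵀ F L⁻¹. Let p₁,…,p_J and q₁,…,q_J be real shifts such that B − p_j C and A − q_j D are invertible for every j. Suppose the matrices X₀ = 0, X_{j−1/2}, X_j (for j = 1,…,J) satisfy the ADI recurrences X_{j−1/2} (B̃ − p_j I) = G − (Ã − p_j I) X_{j−1} and (Ã − q_j I) X_j = G − X_{j−1/2} (B̃ − q_j I). Then the matrices W_j := V⁻¹ X_j L and W_{j−1/2} := Vᵀ X_{j−1/2} L⁻ᵀ satisfy W₀ = 0, W_{j−1/2} = (F − (A − p_j D) W_{j−1}) (B − p_j C)⁻¹ and W_j = (A − q_j D)⁻¹ (F − W_{j−1/2} (B − q_j C)) for every j = 1,…,J. -/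
open Matrix

/-- The change of variables `W_j = V⁻¹ X_j L`, `W_{j−1/2} = Vᵀ X_{j−1/2} L⁻ᵀ`
transforms the ADI iteration for the standard Sylvester equation `Ã X − X B̃ = G`
(where `Ã = V⁻ᵀ A V⁻¹`, `B̃ = L⁻ᵀ B L⁻¹`, `G = V⁻ᵀ F L⁻¹`) into the generalised ADI
iteration of Algorithm 2.  Here `Xh j` denotes the half-step iterate `X_{j−1/2}`. -/
theorem generalised_ADI_change_of_variables (M N : ℕ)
    (A D : Matrix (Fin M) (Fin M) ℝ) (B C : Matrix (Fin N) (Fin N) ℝ)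
    (F : Matrix (Fin M) (Fin N) ℝ)
    (L : Matrix (Fin N) (Fin N) ℝ) (V : Matrix (Fin M) (Fin M) ℝ)
    (hC : C = Lᵀ * L) (hD : D = Vᵀ * V) (hL : IsUnit L) (hV : IsUnit V)
    (J : ℕ) (p q : ℕ → ℝ)
    (hBpC : ∀ j, 1 ≤ j → j ≤ J → IsUnit (B - p j • C))
    (hAqD : ∀ j, 1 ≤ j → j ≤ J → IsUnit (A - q j • D))
    (X Xh : ℕ → Matrix (Fin M) (Fin N) ℝ)
    (hX0 : X 0 = 0)
    (hhalf : ∀ j, 1 ≤ j → j ≤ J →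
      Xh j * (((L⁻¹)ᵀ * B * L⁻¹) - p j • (1 : Matrix (Fin N) (Fin N) ℝ)) =
        ((V⁻¹)ᵀ * F * L⁻¹) -
          (((V⁻¹)ᵀ * A * V⁻¹) - p j • (1 : Matrix (Fin M) (Fin M) ℝ)) * X (j - 1))
    (hfull : ∀ j, 1 ≤ j → j ≤ J →
      (((V⁻¹)ᵀ * A * V⁻¹) - q j • (1 : Matrix (Fin M) (Fin M) ℝ)) * X j =
        ((V⁻¹)ᵀ * F * L⁻¹) -
          Xh j * (((L⁻¹)ᵀ * B * L⁻¹) - q j • (1 : Matrix (Fin N) (Fin N) ℝ))) :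
    V⁻¹ * X 0 * L = 0 ∧
    (∀ j, 1 ≤ j → j ≤ J →
      Vᵀ * Xh j * (L⁻¹)ᵀ =
        (F - (A - p j • D) * (V⁻¹ * X (j - 1) * L)) * (B - p j • C)⁻¹) ∧
    (∀ j, 1 ≤ j → j ≤ J →
      V⁻¹ * X j * L =
        (A - q j • D)⁻¹ * (F - (Vᵀ * Xh j * (L⁻¹)ᵀ) * (B - q j • C))) := by
  have hLd : IsUnit L.det := (Matrix.isUnit_iff_isUnit_det L).mp hL
  have hVd : IsUnit V.det := (Matrix.isUnit_iff_isUnit_det V).mp hV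
  -- cancellation lemmas
  have cV1 : ∀ (Z : Matrix (Fin M) (Fin N) ℝ), Vᵀ * ((V⁻¹)ᵀ * Z) = Z := by
    intro Z
    rw [← Matrix.mul_assoc, ← Matrix.transpose_mul, Matrix.nonsing_inv_mul _ hVd,
      Matrix.transpose_one, Matrix.one_mul]
  have cV2 : ∀ (Z : Matrix (Fin M) (Fin N) ℝ), V * (V⁻¹ * Z) = Z := by
    intro Z
    rw [← Matrix.mul_assoc, Matrix.mul_nonsing_inv _ hVd, Matrix.one_mul]
  have cL1 : ∀ (Z : Matrix (Fin N) (Fin N) ℝ), (L⁻¹)ᵀ * (Lᵀ * Z) = Z := by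
    intro Z
    rw [← Matrix.mul_assoc, ← Matrix.transpose_mul, Matrix.mul_nonsing_inv _ hLd,
      Matrix.transpose_one, Matrix.one_mul]
  have cL2 : L⁻¹ * L = 1 := Matrix.nonsing_inv_mul _ hLd
  refine ⟨by rw [hX0, Matrix.mul_zero, Matrix.zero_mul], ?_, ?_⟩
  · intro j hj1 hj2
    have hkey : (Vᵀ * Xh j * (L⁻¹)ᵀ) * (B - p j • C) =
        F - (A - p j • D) * (V⁻¹ * X (j - 1) * L) := by
      have h := congrArg (fun Y => Vᵀ * Y * L) (hhalf j hj1 hj2)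
      calc (Vᵀ * Xh j * (L⁻¹)ᵀ) * (B - p j • C)
          = Vᵀ * (Xh j * (((L⁻¹)ᵀ * B * L⁻¹) - p j • (1 : Matrix (Fin N) (Fin N) ℝ))) * L := by
            rw [hC]
            simp only [Matrix.mul_sub, Matrix.sub_mul, Matrix.mul_smul, Matrix.smul_mul,
              Matrix.mul_one, Matrix.mul_assoc, cL1, cL2]
        _ = Vᵀ * (((V⁻¹)ᵀ * F * L⁻¹) -
              (((V⁻¹)ᵀ * A * V⁻¹) - p j • (1 : Matrix (Fin M) (Fin M) ℝ)) * X (j - 1)) * L := by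
            rw [Matrix.mul_assoc, Matrix.mul_assoc] at h ⊢
            rw [h]
        _ = F - (A - p j • D) * (V⁻¹ * X (j - 1) * L) := by
            rw [hD]
            simp only [Matrix.mul_sub, Matrix.sub_mul, Matrix.mul_smul, Matrix.smul_mul,
              Matrix.mul_one, Matrix.one_mul, Matrix.mul_assoc, cV1, cV2, cL2]
    have hu := (Matrix.isUnit_iff_isUnit_det _).mp (hBpC j hj1 hj2)
    calc Vᵀ * Xh j * (L⁻¹)ᵀ
        = (Vᵀ * Xh j * (L⁻¹)ᵀ) * (B - p j • C) * (B - p j • C)⁻¹ := by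
          rw [Matrix.mul_assoc _ (B - p j • C) _, Matrix.mul_nonsing_inv _ hu, Matrix.mul_one]
      _ = (F - (A - p j • D) * (V⁻¹ * X (j - 1) * L)) * (B - p j • C)⁻¹ := by rw [hkey]
  · intro j hj1 hj2
    have hkey : (A - q j • D) * (V⁻¹ * X j * L) =
        F - (Vᵀ * Xh j * (L⁻¹)ᵀ) * (B - q j • C) := by
      have h := congrArg (fun Y => Vᵀ * Y * L) (hfull j hj1 hj2)
      calc (A - q j • D) * (V⁻¹ * X j * L)
          = Vᵀ * ((((V⁻¹)ᵀ * A * V⁻¹) - q j • (1 : Matrix (Fin M) (Fin M) ℝ)) * X j) * L := by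
            rw [hD]
            simp only [Matrix.mul_sub, Matrix.sub_mul, Matrix.mul_smul, Matrix.smul_mul,
              Matrix.mul_one, Matrix.one_mul, Matrix.mul_assoc, cV1, cV2]
        _ = Vᵀ * (((V⁻¹)ᵀ * F * L⁻¹) -
              Xh j * (((L⁻¹)ᵀ * B * L⁻¹) - q j • (1 : Matrix (Fin N) (Fin N) ℝ))) * L := by
            rw [Matrix.mul_assoc, Matrix.mul_assoc] at h ⊢
            rw [h]
        _ = F - (Vᵀ * Xh j * (L⁻¹)ᵀ) * (B - q j • C) := by
            rw [hC]
            simp only [Matrix.mul_sub, Matrix.sub_mul, Matrix.mul_smul, Matrix.smul_mul,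
              Matrix.mul_one, Matrix.mul_assoc, cV1, cL1, cL2]
    have hu := (Matrix.isUnit_iff_isUnit_det _).mp (hAqD j hj1 hj2)
    calc V⁻¹ * X j * L
        = (A - q j • D)⁻¹ * ((A - q j • D) * (V⁻¹ * X j * L)) := by
          rw [← Matrix.mul_assoc _ (A - q j • D) _, Matrix.nonsing_inv_mul _ hu, Matrix.one_mul]
      _ = (A - q j • D)⁻¹ * (F - (Vᵀ * Xh j * (L⁻¹)ᵀ) * (B - q j • C)) := by rw [hkey]
end

section
/- Let a < b be real numbers, let a = x₀ < x₁ < ⋯ < xₙ = b be a partition, and let u : ℝ → ℝ be a continuous function on [a,b] whose restriction to each subinterval [x_{i−1}, x_i] agrees with a polynomial, with u(a) = u(b) = 0 and u not identically zero on [a,b]. Let u' denote its (piecewise, almost-everywhere defined) derivative, let ω ≥ 0, and let λ > 0 satisfy ∫ₐᵇ u(x)² dx = λ · ( ∫ₐᵇ u'(x)² dx + (ω²/2) ∫ₐᵇ u(x)² dx ). Then λ ≤ (b − a)² / π². -/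
open scoped Polynomial
open intervalIntegral
open Filter Topology

lemma sud_tendsto_div_sin :
    Tendsto (fun y : ℝ => y / Real.sin y) (𝓝[≠] (0:ℝ)) (𝓝 1) := by
  have h := hasDerivAt_iff_tendsto_slope.mp (Real.hasDerivAt_sin 0)
  rw [Real.cos_zero] at h
  have h2 := h.inv₀ one_ne_zero
  rw [inv_one] at h2
  refine h2.congr fun y => ?_
  rw [slope_def_field, Real.sin_zero, sub_zero, sub_zero, inv_div]

lemma sud_ratio_comp (c z : ℝ) (hc : c ≠ 0) :
    Tendsto (fun t => c * (t - z) / Real.sin (c * (t - z))) (𝓝[≠] z) (𝓝 1) := by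
  apply sud_tendsto_div_sin.comp
  apply tendsto_nhdsWithin_of_tendsto_nhds_of_eventually_within
  · have : Tendsto (fun t => c * (t - z)) (𝓝 z) (𝓝 (c * (z - z))) :=
      (continuous_const.mul (continuous_id.sub continuous_const)).tendsto z
    simpa using this.mono_left nhdsWithin_le_nhds
  · filter_upwards [self_mem_nhdsWithin] with t ht
    simp only [Set.mem_compl_iff, Set.mem_singleton_iff] at ht ⊢
    intro h
    rcases mul_eq_zero.mp h with h | h
    · exact hc h
    · exact ht (by linarith [sub_eq_zero.mp h])

lemma sud_hasDerivAt (c z t : ℝ) (p : Polynomial ℝ) (hs : Real.sin (c * (t - z)) ≠ 0) :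
    HasDerivAt (fun τ => c * Real.cos (c * (τ - z)) / Real.sin (c * (τ - z)) * (p.eval τ) ^ 2)
      (-(c ^ 2) / Real.sin (c * (t - z)) ^ 2 * (p.eval t) ^ 2
        + c * Real.cos (c * (t - z)) / Real.sin (c * (t - z))
            * (2 * p.eval t * p.derivative.eval t)) t := by
  have hθ : HasDerivAt (fun τ : ℝ => c * (τ - z)) c t := by
    simpa using ((hasDerivAt_id t).sub_const z).const_mul c
  have hcos : HasDerivAt (fun τ => Real.cos (c * (τ - z)))
      (-Real.sin (c * (t - z)) * c) t := (Real.hasDerivAt_cos _).comp t hθ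
  have hsin : HasDerivAt (fun τ => Real.sin (c * (τ - z)))
      (Real.cos (c * (t - z)) * c) t := (Real.hasDerivAt_sin _).comp t hθ
  have hg := (hcos.const_mul c).div hsin hs
  have hp : HasDerivAt (fun τ => (p.eval τ) ^ 2)
      (2 * p.eval t * p.derivative.eval t) t := by
    have := (p.hasDerivAt t).fun_pow 2
    simpa [mul_comm, mul_assoc, mul_left_comm] using this
  have := hg.mul hp
  refine this.congr_deriv ?_
  congr 2
  symm
  have hpyth := Real.sin_sq_add_cos_sq (c * (t - z))
  rw [div_eq_div_iff (by positivity) (by positivity)]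
  linear_combination (c ^ 2 * Real.sin (c * (t - z)) ^ 2) * hpyth

lemma sud_cell (a b : ℝ) (hab : a < b) (s e : ℝ) (has : a ≤ s) (hse : s < e) (heb : e ≤ b)
    (p : Polynomial ℝ) (hpa : s = a → p.eval a = 0) (hpb : e = b → p.eval b = 0) :
    Real.pi / (b - a) * Real.cos (Real.pi / (b - a) * (e - a)) /
          Real.sin (Real.pi / (b - a) * (e - a)) * (p.eval e) ^ 2
      - Real.pi / (b - a) * Real.cos (Real.pi / (b - a) * (s - a)) /
          Real.sin (Real.pi / (b - a) * (s - a)) * (p.eval s) ^ 2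
    ≤ (∫ t in s..e, (p.derivative.eval t) ^ 2)
      - (Real.pi / (b - a)) ^ 2 * ∫ t in s..e, (p.eval t) ^ 2 := by
  have hba : (0:ℝ) < b - a := by linarith
  set c : ℝ := Real.pi / (b - a) with hc_def
  have hc : 0 < c := by positivity
  have hcb : c * (b - a) = Real.pi := div_mul_cancel₀ Real.pi hba.ne'
  set Fi : ℝ → ℝ := fun t => c * Real.cos (c * (t - a)) / Real.sin (c * (t - a)) * (p.eval t) ^ 2
    with hFi_def
  set φ : ℝ → ℝ := fun t => (p.derivative.eval t) ^ 2 - c ^ 2 * (p.eval t) ^ 2 with hφ_def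
  have hφcont : Continuous φ :=
    (p.derivative.continuous.pow 2).sub (continuous_const.mul (p.continuous.pow 2))
  have hsinpos : ∀ t ∈ Set.Ioo a b, 0 < Real.sin (c * (t - a)) := by
    intro t ht
    apply Real.sin_pos_of_pos_of_lt_pi
    · have : 0 < t - a := by linarith [ht.1]
      positivity
    · rw [← hcb]
      have : t - a < b - a := by linarith [ht.2]
      exact (mul_lt_mul_iff_right₀ hc).mpr this
  -- continuity of Fi on [s,e]
  have hFcont : ContinuousOn Fi (Set.Icc s e) := by
    intro t ht
    rcases eq_or_lt_of_le (has.trans ht.1) with hta | hta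
    · -- t = a
      subst hta
      have hroot : p.eval a = 0 := hpa (le_antisymm ht.1 has)
      obtain ⟨R, hR⟩ := Polynomial.dvd_iff_isRoot.mpr hroot
      have hps : ∀ τ : ℝ, p.eval τ = (τ - a) * R.eval τ := by
        intro τ; rw [hR]; simp
      have hFi0 : Fi a = 0 := by simp [hFi_def]
      rw [← continuousWithinAt_diff_self]
      unfold ContinuousWithinAt
      rw [hFi0]
      have hsub : Set.Icc s e \ {a} ⊆ {a}ᶜ := fun τ hτ => hτ.2
      apply Tendsto.mono_left _ (nhdsWithin_mono a hsub)
      have heqF : ∀ τ : ℝ, Fi τ = (c * (τ - a) / Real.sin (c * (τ - a)))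
          * (Real.cos (c * (τ - a)) * ((τ - a) * (R.eval τ) ^ 2)) := by
        intro τ
        by_cases hsin : Real.sin (c * (τ - a)) = 0
        · simp [hFi_def, hsin]
        · rw [hFi_def]; simp only []; rw [hps τ]; field_simp
      apply Tendsto.congr (fun τ => (heqF τ).symm)
      have h1 := sud_ratio_comp c a hc.ne'
      have h2 : Tendsto (fun τ => Real.cos (c * (τ - a)) * ((τ - a) * (R.eval τ) ^ 2))
          (𝓝[≠] a) (𝓝 0) := by
        have hcont : Continuous fun τ => Real.cos (c * (τ - a)) * ((τ - a) * (R.eval τ) ^ 2) :=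
          (Real.continuous_cos.comp (continuous_const.mul (continuous_id.sub continuous_const))).mul
            ((continuous_id.sub continuous_const).mul (R.continuous.pow 2))
        have := hcont.tendsto a
        simp only [sub_self, zero_mul, mul_zero] at this
        exact this.mono_left nhdsWithin_le_nhds
      simpa using h1.mul h2
    · rcases eq_or_lt_of_le (ht.2.trans heb) with htb | htb
      · -- t = b
        have heb' : e = b := le_antisymm heb (htb ▸ ht.2)
        have hroot : p.eval b = 0 := hpb heb'
        obtain ⟨R, hR⟩ := Polynomial.dvd_iff_isRoot.mpr hroot
        have hps : ∀ τ : ℝ, p.eval τ = (τ - b) * R.eval τ := by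
          intro τ; rw [hR]; simp
        have hsin_flip : ∀ τ : ℝ, Real.sin (c * (τ - a)) = Real.sin ((-c) * (τ - b)) := by
          intro τ
          rw [show c * (τ - a) = Real.pi - (-c) * (τ - b) by rw [← hcb]; ring, Real.sin_pi_sub]
        have hFi0 : Fi b = 0 := by
          simp [hFi_def, hsin_flip b, hps b]
        subst htb
        rw [← continuousWithinAt_diff_self]
        unfold ContinuousWithinAt
        rw [hFi0]
        have hsub : Set.Icc s e \ {t} ⊆ {t}ᶜ := fun τ hτ => hτ.2
        apply Tendsto.mono_left _ (nhdsWithin_mono t hsub)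
        have heqF : ∀ τ : ℝ, Fi τ = ((-c) * (τ - t) / Real.sin ((-c) * (τ - t)))
            * (Real.cos (c * (τ - a)) * (-((τ - t) * (R.eval τ) ^ 2))) := by
          intro τ
          rw [hFi_def]; simp only []
          rw [hsin_flip τ]
          by_cases hsin : Real.sin ((-c) * (τ - t)) = 0
          · have h1 : Real.sin (c * (τ - t)) = 0 := by
              simpa [neg_mul, Real.sin_neg, neg_eq_zero] using hsin
            simp [neg_mul, Real.sin_neg, h1]
          · rw [hps τ]; field_simp
        apply Tendsto.congr (fun τ => (heqF τ).symm)
        have h1 := sud_ratio_comp (-c) t (neg_ne_zero.mpr hc.ne')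
        have h2 : Tendsto (fun τ => Real.cos (c * (τ - a)) * (-((τ - t) * (R.eval τ) ^ 2)))
            (𝓝[≠] t) (𝓝 0) := by
          have hcont : Continuous fun τ => Real.cos (c * (τ - a)) * (-((τ - t) * (R.eval τ) ^ 2)) :=
            (Real.continuous_cos.comp (continuous_const.mul
              (continuous_id.sub continuous_const))).mul
              (((continuous_id.sub continuous_const).mul (R.continuous.pow 2)).neg)
          have := hcont.tendsto t
          simp only [sub_self, zero_mul, neg_zero, mul_zero] at this
          exact this.mono_left nhdsWithin_le_nhds
        simpa using h1.mul h2
      · -- interior point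
        have hne := (hsinpos t ⟨hta, htb⟩).ne'
        apply ContinuousAt.continuousWithinAt
        apply ContinuousAt.mul _ ((p.continuous.pow 2).continuousAt)
        apply ContinuousAt.div
        · exact (continuous_const.mul (Real.continuous_cos.comp
            (continuous_const.mul (continuous_id.sub continuous_const)))).continuousAt
        · exact (Real.continuous_sin.comp
            (continuous_const.mul (continuous_id.sub continuous_const))).continuousAt
        · exact hne
  -- primitive of φ
  have hprim : ∀ t : ℝ, HasDerivAt (fun τ => ∫ y in s..τ, φ y) (φ t) t := fun t =>
    intervalIntegral.integral_hasDerivAt_right (hφcont.intervalIntegrable _ _)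
      (hφcont.stronglyMeasurableAtFilter _ _) hφcont.continuousAt
  have hdiff : Differentiable ℝ (fun τ => ∫ y in s..τ, φ y) := fun t => (hprim t).differentiableAt
  set G : ℝ → ℝ := fun t => (∫ y in s..t, φ y) - Fi t with hG_def
  have hGmono : MonotoneOn G (Set.Icc s e) := by
    apply monotoneOn_of_deriv_nonneg (convex_Icc s e)
    · exact (hdiff.continuous.continuousOn).sub hFcont
    · rw [interior_Icc]
      intro t ht
      have hne := (hsinpos t ⟨lt_of_le_of_lt has ht.1, lt_of_lt_of_le ht.2 heb⟩).ne'
      exact ((hprim t).sub (sud_hasDerivAt c a t p hne)).differentiableAt.differentiableWithinAt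
    · rw [interior_Icc]
      intro t ht
      have hne := (hsinpos t ⟨lt_of_le_of_lt has ht.1, lt_of_lt_of_le ht.2 heb⟩).ne'
      have hD := (hprim t).sub (sud_hasDerivAt c a t p hne)
      rw [show deriv G t = _ from hD.deriv]
      have hpyth := Real.sin_sq_add_cos_sq (c * (t - a))
      set S := Real.sin (c * (t - a)) with hS_def
      set C := Real.cos (c * (t - a)) with hC_def
      set q := p.eval t with hq_def
      set q' := p.derivative.eval t with hq'_def
      have hS2 : (0:ℝ) < S ^ 2 := by positivity
      have h0 : (0:ℝ) ≤ (S * q' - c * C * q) ^ 2 := sq_nonneg _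
      have heq : (φ t - (-(c ^ 2) / S ^ 2 * q ^ 2 + c * C / S * (2 * q * q'))) * S ^ 2
          = (S * q' - c * C * q) ^ 2 := by
        rw [hφ_def]
        field_simp
        linear_combination (-(Real.pi ^ 2 * (b - a)⁻¹ ^ 2) * (Polynomial.eval t p) ^ 2) * hpyth
      nlinarith [h0, heq, hS2]
  have hGse := hGmono (Set.left_mem_Icc.mpr hse.le) (Set.right_mem_Icc.mpr hse.le) hse.le
  have hGs : G s = -Fi s := by
    simp [hG_def, intervalIntegral.integral_same]
  have hint : (∫ y in s..e, φ y) = (∫ t in s..e, (p.derivative.eval t) ^ 2)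
      - c ^ 2 * ∫ t in s..e, (p.eval t) ^ 2 := by
    rw [hφ_def,
      intervalIntegral.integral_sub ((by fun_prop : Continuous fun t => (p.derivative.eval t) ^ 2).intervalIntegrable _ _)
        ((by fun_prop : Continuous fun t => c ^ 2 * (p.eval t) ^ 2).intervalIntegrable _ _),
      intervalIntegral.integral_const_mul]
  have hGe : G e = (∫ y in s..e, φ y) - Fi e := rfl
  show Fi e - Fi s ≤ _
  rw [hGs, hGe, hint] at hGse
  linarith

/-- (Dirichlet upper bound in the spectral lemma.)  Let `u` be a continuous
piecewise-polynomial function on `[a, b]` (with pieces `Q i` on the cells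
`[x i, x (i+1)]` of the partition `a = x 0 < ⋯ < x n = b`), vanishing at the endpoints and
not identically zero.  If `λ > 0` satisfies
`∫ₐᵇ u² = λ (∑ᵢ ∫ (Qᵢ)'² + (ω²/2) ∫ₐᵇ u²)` with `ω ≥ 0`, then `λ ≤ (b−a)²/π²`. -/
theorem spectral_upper_bound_dirichlet (a b : ℝ) (hab : a < b)
    (n : ℕ) (hn : 0 < n) (x : ℕ → ℝ) (hx0 : x 0 = a) (hxn : x n = b)
    (hmono : ∀ i < n, x i < x (i + 1))
    (u : ℝ → ℝ) (hu : ContinuousOn u (Set.Icc a b))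
    (Q : ℕ → Polynomial ℝ)
    (hQ : ∀ i < n, ∀ t ∈ Set.Icc (x i) (x (i + 1)), u t = (Q i).eval t)
    (hua : u a = 0) (hub : u b = 0)
    (hne : ∃ t ∈ Set.Icc a b, u t ≠ 0)
    (ω : ℝ) (hω : 0 ≤ ω) (lam : ℝ) (hlam : 0 < lam)
    (heq : (∫ t in a..b, (u t) ^ 2) =
      lam * ((∑ i ∈ Finset.range n,
          ∫ t in (x i)..(x (i + 1)), ((Q i).derivative.eval t) ^ 2) +
        (ω ^ 2 / 2) * ∫ t in a..b, (u t) ^ 2)) :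
    lam ≤ (b - a) ^ 2 / Real.pi ^ 2 := by
  have hba : (0:ℝ) < b - a := sub_pos.mpr hab
  have hπ := Real.pi_pos
  have hcb : Real.pi / (b - a) * (b - a) = Real.pi := div_mul_cancel₀ Real.pi hba.ne'
  -- chain facts
  have hchain : ∀ j ≤ n, ∀ i ≤ j, x i ≤ x j := by
    intro j hj
    induction j with
    | zero => intro i hi; rw [Nat.le_zero.mp hi]
    | succ k ih =>
      intro i hik
      rcases Nat.eq_or_lt_of_le hik with h | h
      · rw [h]
      · exact le_trans (ih (by omega) i (Nat.lt_succ_iff.mp h))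
          (hmono k (by omega)).le
  have hxa : ∀ i ≤ n, a ≤ x i := fun i hi => hx0 ▸ hchain i hi 0 (Nat.zero_le _)
  have hxb : ∀ i ≤ n, x i ≤ b := fun i hi => hxn ▸ hchain n le_rfl i hi
  -- integrability of u^2 on cells
  have hu2int : ∀ i < n, IntervalIntegrable (fun t => (u t) ^ 2)
      MeasureTheory.volume (x i) (x (i + 1)) := by
    intro i hi
    apply ContinuousOn.intervalIntegrable
    rw [Set.uIcc_of_le (hmono i hi).le]
    refine (hu.mono ?_).pow 2
    intro τ hτ
    exact ⟨le_trans (hxa i hi.le) hτ.1, le_trans hτ.2 (hxb (i+1) hi)⟩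
  set F : ℝ → ℝ := fun t => Real.pi / (b - a) * Real.cos (Real.pi / (b - a) * (t - a)) /
      Real.sin (Real.pi / (b - a) * (t - a)) * (u t) ^ 2 with hF_def
  have hFa : F a = 0 := by simp [hF_def]
  have hFb : F b = 0 := by
    have h0 : Real.sin (Real.pi / (b - a) * (b - a)) = 0 := by rw [hcb, Real.sin_pi]
    simp [hF_def, h0]
  -- per-cell inequality
  have hcell : ∀ i < n, F (x (i + 1)) - F (x i)
      ≤ (∫ t in (x i)..(x (i + 1)), ((Q i).derivative.eval t) ^ 2)
        - (Real.pi / (b - a)) ^ 2 * ∫ t in (x i)..(x (i + 1)), (u t) ^ 2 := by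
    intro i hi
    have hxi := hmono i hi
    have hpa : x i = a → (Q i).eval a = 0 := by
      intro h
      rw [← hQ i hi a ⟨le_of_eq h, by rw [← h]; exact hxi.le⟩]
      exact hua
    have hpb : x (i + 1) = b → (Q i).eval b = 0 := by
      intro h
      rw [← hQ i hi b ⟨by rw [← h]; exact hxi.le, le_of_eq h.symm⟩]
      exact hub
    have hkey := sud_cell a b hab (x i) (x (i + 1)) (hxa i hi.le) hxi (hxb (i + 1) hi)
      (Q i) hpa hpb
    have h1 : u (x i) = (Q i).eval (x i) := hQ i hi (x i) ⟨le_rfl, hxi.le⟩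
    have h2 : u (x (i + 1)) = (Q i).eval (x (i + 1)) := hQ i hi _ ⟨hxi.le, le_rfl⟩
    have h3 : (∫ t in (x i)..(x (i + 1)), ((Q i).eval t) ^ 2)
        = ∫ t in (x i)..(x (i + 1)), (u t) ^ 2 := by
      apply intervalIntegral.integral_congr
      intro τ hτ
      rw [Set.uIcc_of_le hxi.le] at hτ
      show Polynomial.eval τ (Q i) ^ 2 = u τ ^ 2
      rw [hQ i hi τ hτ]
    rw [hF_def]
    simp only []
    rw [h1, h2, ← h3]
    exact hkey
  -- telescoping sum
  have htel : ∑ i ∈ Finset.range n, (F (x (i + 1)) - F (x i)) = 0 := by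
    rw [Finset.sum_range_sub (fun i => F (x i)) n, hxn, hx0, hFb, hFa, sub_zero]
  have hsum := Finset.sum_le_sum (fun i hi => hcell i (Finset.mem_range.mp hi))
  rw [htel, Finset.sum_sub_distrib, ← Finset.mul_sum,
    intervalIntegral.sum_integral_adjacent_intervals hu2int, hx0, hxn] at hsum
  -- hsum : 0 ≤ D - (π/(b-a))² * I
  set I : ℝ := ∫ t in a..b, (u t) ^ 2 with hI_def
  set D : ℝ := ∑ i ∈ Finset.range n,
    ∫ t in (x i)..(x (i + 1)), ((Q i).derivative.eval t) ^ 2 with hD_def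
  -- positivity of I
  obtain ⟨t₀, ht₀, hut₀⟩ := hne
  have ht₀ab : t₀ ∈ Set.Ioo a b := by
    constructor
    · exact lt_of_le_of_ne ht₀.1 (fun h => hut₀ (by rw [← h]; exact hua))
    · exact lt_of_le_of_ne ht₀.2 (fun h => hut₀ (by rw [h]; exact hub))
  have hIpos : 0 < I := by
    have hCA : ContinuousAt u t₀ := hu.continuousAt (Icc_mem_nhds ht₀ab.1 ht₀ab.2)
    have hev : ∀ᶠ y in 𝓝 t₀, u y ≠ 0 := hCA.eventually_ne hut₀
    rw [Metric.eventually_nhds_iff] at hev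
    obtain ⟨ε, hε, hball⟩ := hev
    rw [hI_def, intervalIntegral.integral_of_le hab.le]
    rw [MeasureTheory.setIntegral_pos_iff_support_of_nonneg_ae
      (MeasureTheory.ae_of_all _ (fun y => sq_nonneg (u y)))
      (((hu.pow 2).integrableOn_Icc).mono_set Set.Ioc_subset_Icc_self)]
    set α := max a (t₀ - ε / 2) with hα_def
    set β := min b (t₀ + ε / 2) with hβ_def
    have hαβ : α < t₀ ∧ t₀ < β := by
      constructor
      · exact max_lt ht₀ab.1 (by linarith)
      · exact lt_min ht₀ab.2 (by linarith)
    have hsub : Set.Ioo α β ⊆ Function.support (fun t => (u t) ^ 2) ∩ Set.Ioc a b := by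
      intro y hy
      have hya : a < y := lt_of_le_of_lt (le_max_left _ _) hy.1
      have hyb : y < b := lt_of_lt_of_le hy.2 (min_le_left _ _)
      have hd : dist y t₀ < ε := by
        rw [Real.dist_eq, abs_sub_lt_iff]
        constructor
        · have := lt_of_lt_of_le hy.2 (min_le_right _ _); linarith
        · have := lt_of_le_of_lt (le_max_right _ _) hy.1; linarith
      refine ⟨?_, ⟨hya, hyb.le⟩⟩
      simp only [Function.mem_support]
      exact pow_ne_zero 2 (hball hd)
    calc (0:ENNReal) < MeasureTheory.volume (Set.Ioo α β) := by
          rw [Real.volume_Ioo]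
          exact ENNReal.ofReal_pos.mpr (by linarith [hαβ.1, hαβ.2])
      _ ≤ _ := MeasureTheory.measure_mono hsub
  -- final algebra
  have hpoinc : (Real.pi / (b - a)) ^ 2 * I ≤ D := by linarith
  have hωI : 0 ≤ ω ^ 2 / 2 * I := by positivity
  have h1 : lam * ((Real.pi / (b - a)) ^ 2 * I) ≤ I := by
    calc lam * ((Real.pi / (b - a)) ^ 2 * I) ≤ lam * (D + ω ^ 2 / 2 * I) := by
          apply mul_le_mul_of_nonneg_left _ hlam.le
          linarith
      _ = I := heq.symm
  have h2 : lam * (Real.pi / (b - a)) ^ 2 ≤ 1 := by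
    have h1' : lam * (Real.pi / (b - a)) ^ 2 * I ≤ 1 * I := by
      rw [mul_assoc, one_mul]; exact h1
    exact le_of_mul_le_mul_right h1' hIpos
  rw [le_div_iff₀ (by positivity : (0:ℝ) < Real.pi ^ 2)]
  calc lam * Real.pi ^ 2 = lam * (Real.pi / (b - a)) ^ 2 * (b - a) ^ 2 := by
        field_simp
    _ ≤ 1 * (b - a) ^ 2 :=
        mul_le_mul_of_nonneg_right h2 (by positivity)
    _ = (b - a) ^ 2 := one_mul _
end

section
/- Let a < b be real numbers, let a = x₀ < x₁ < ⋯ < xₙ = b be a partition with h := min over i of (x_i − x_{i−1}), and let p ≥ 1. Let u : ℝ → ℝ be a continuous function on [a,b] whose restriction to each subinterval [x_{i−1}, x_i] agrees with a polynomial of degree at most p, with u not identically zero on [a,b]. Let u' denote its (piecewise, almost-everywhere defined) derivative, let ω ≥ 0, and let λ > 0 satisfy ∫ₐᵇ u(x)² dx = λ · ( ∫ₐᵇ u'(x)² dx + (ω²/2) ∫ₐᵇ u(x)² dx ). Then λ ≥ 2h² / (24 p⁴ + ω² h²). -/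
open scoped Polynomial
open intervalIntegral

section SpectralAux
open Polynomial intervalIntegral

noncomputable def AP (c d : ℝ) (k : ℕ) : ℝ[X] := ((X - C c) * (X - C d)) ^ k
noncomputable def LP (c d : ℝ) (k : ℕ) : ℝ[X] :=
  C ((k.factorial : ℝ)⁻¹) * derivative^[k] (AP c d k)

lemma factor_iter_deriv (r : ℝ) (k : ℕ) (B : ℝ[X]) :
    ∀ m, m ≤ k → ∃ Cm : ℝ[X],
      derivative^[m] ((X - C r) ^ k * B) = (X - C r) ^ (k - m) * Cm ∧
      Cm.eval r = (k.descFactorial m : ℝ) * B.eval r := by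
  intro m
  induction m with
  | zero => intro _; exact ⟨B, by simp⟩
  | succ m ih =>
    intro hm
    obtain ⟨Cm, hCm, hev⟩ := ih (Nat.le_of_succ_le hm)
    refine ⟨C ((k - m : ℕ) : ℝ) * Cm + (X - C r) * derivative Cm, ?_, ?_⟩
    · rw [Function.iterate_succ_apply', hCm]
      have hkm : k - m = (k - (m + 1)) + 1 := by omega
      rw [hkm]
      rw [derivative_mul, derivative_pow, derivative_sub, derivative_X, derivative_C]
      push_cast
      ring
    · have : k.descFactorial (m + 1) = (k - m) * k.descFactorial m := Nat.descFactorial_succ k m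
      simp [this, hev]
      push_cast
      ring

lemma AP_eval_boundary (c d : ℝ) (k m : ℕ) (hm : m < k) :
    (derivative^[m] (AP c d k)).eval c = 0 ∧ (derivative^[m] (AP c d k)).eval d = 0 := by
  constructor
  · obtain ⟨Cm, hCm, _⟩ := factor_iter_deriv c k ((X - C d) ^ k) m hm.le
    have : AP c d k = (X - C c) ^ k * (X - C d) ^ k := by rw [AP, mul_pow]
    rw [this, hCm]
    have h1 : 1 ≤ k - m := by omega
    simp [eval_pow, zero_pow (by omega : k - m ≠ 0)]
  · obtain ⟨Cm, hCm, _⟩ := factor_iter_deriv d k ((X - C c) ^ k) m hm.le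
    have : AP c d k = (X - C d) ^ k * (X - C c) ^ k := by rw [AP, mul_pow, mul_comm]
    rw [this, hCm]
    simp [eval_pow, zero_pow (by omega : k - m ≠ 0)]

lemma AP_monic (c d : ℝ) (k : ℕ) : (AP c d k).Monic :=
  ((monic_X_sub_C c).mul (monic_X_sub_C d)).pow k

lemma AP_natDegree (c d : ℝ) (k : ℕ) : (AP c d k).natDegree = 2 * k := by
  rw [AP]
  rw [Monic.natDegree_pow ((monic_X_sub_C c).mul (monic_X_sub_C d))]
  rw [Monic.natDegree_mul (monic_X_sub_C c) (monic_X_sub_C d)]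
  simp [natDegree_X_sub_C]; ring

lemma LP_natDegree_le (c d : ℝ) (k : ℕ) : (LP c d k).natDegree ≤ k := by
  refine (natDegree_C_mul_le _ _).trans ?_
  refine (natDegree_iterate_derivative _ _).trans ?_
  rw [AP_natDegree]; omega

lemma LP_coeff_self (c d : ℝ) (k : ℕ) :
    (LP c d k).coeff k = (k.factorial : ℝ)⁻¹ * ((2 * k).descFactorial k : ℝ) := by
  rw [LP, coeff_C_mul, coeff_iterate_derivative]
  have h2 : k + k = 2 * k := by ring
  rw [h2]
  have : (AP c d k).coeff (2 * k) = 1 := by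
    have := AP_monic c d k
    have hd := AP_natDegree c d k
    rw [← hd]; exact this
  rw [this]
  simp

lemma LP_coeff_self_ne (c d : ℝ) (k : ℕ) : (LP c d k).coeff k ≠ 0 := by
  rw [LP_coeff_self]
  refine mul_ne_zero (inv_ne_zero ?_) ?_
  · exact_mod_cast k.factorial_ne_zero
  · have : (2 * k).descFactorial k ≠ 0 := by
      rw [Ne, Nat.descFactorial_eq_zero_iff_lt]; omega
    exact_mod_cast this

lemma LP_zero (c d : ℝ) : LP c d 0 = 1 := by simp [LP, AP]

lemma span_LP (c d : ℝ) : ∀ (n : ℕ) (q : ℝ[X]), q.natDegree ≤ n →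
    ∃ co : ℕ → ℝ, q = ∑ k ∈ Finset.range (n + 1), C (co k) * LP c d k := by
  intro n
  induction n with
  | zero =>
    intro q hq
    refine ⟨fun _ => q.coeff 0, ?_⟩
    rw [Finset.sum_range_one, LP_zero, mul_one]
    exact q.eq_C_of_natDegree_le_zero hq
  | succ n ih =>
    intro q hq
    set L := (LP c d (n + 1)).coeff (n + 1) with hL
    set γ := q.coeff (n + 1) / L with hγ
    have hr : (q - C γ * LP c d (n + 1)).natDegree ≤ n := by
      rw [natDegree_le_iff_coeff_eq_zero]
      intro m hm
      rw [coeff_sub, coeff_C_mul]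
      rcases eq_or_lt_of_le (Nat.succ_le_of_lt hm) with hmeq | hmlt
      · rw [← hmeq, hγ, div_mul_cancel₀ _ (LP_coeff_self_ne c d (n + 1))]
        ring
      · rw [coeff_eq_zero_of_natDegree_lt (lt_of_le_of_lt hq hmlt),
          coeff_eq_zero_of_natDegree_lt (lt_of_le_of_lt (LP_natDegree_le c d (n + 1)) hmlt)]
        ring
    obtain ⟨co, hco⟩ := ih _ hr
    refine ⟨Function.update co (n + 1) γ, ?_⟩
    rw [Finset.sum_range_succ]
    have h1 : ∀ k ∈ Finset.range (n + 1),
        C (Function.update co (n + 1) γ k) * LP c d k = C (co k) * LP c d k := by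
      intro k hk
      rw [Function.update_of_ne (by simp at hk; omega)]
    rw [Finset.sum_congr rfl h1, ← hco, Function.update_self]
    ring

-- integration by parts for polynomials

lemma ibp_poly (c d : ℝ) (f g : ℝ[X]) :
    ∫ t in c..d, (derivative f).eval t * g.eval t =
      f.eval d * g.eval d - f.eval c * g.eval c -
        ∫ t in c..d, f.eval t * (derivative g).eval t := by
  have h := intervalIntegral.integral_mul_deriv_eq_deriv_mul
    (u := fun t => g.eval t) (v := fun t => f.eval t)
    (u' := fun t => (derivative g).eval t) (v' := fun t => (derivative f).eval t)
    (a := c) (b := d)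
    (fun x _ => g.hasDerivAt x) (fun x _ => f.hasDerivAt x)
    ((derivative g).continuous.intervalIntegrable c d)
    ((derivative f).continuous.intervalIntegrable c d)
  have h1 : ∫ t in c..d, (derivative f).eval t * g.eval t
      = ∫ t in c..d, g.eval t * (derivative f).eval t := by
    simp_rw [mul_comm]
  have h2 : ∫ t in c..d, f.eval t * (derivative g).eval t
      = ∫ t in c..d, (derivative g).eval t * f.eval t := by
    simp_rw [mul_comm]
  rw [h1, h, h2]; ring

-- iterated integration by parts
lemma ibp_iter (c d : ℝ) (k : ℕ) (g : ℝ[X]) :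
    ∫ t in c..d, (derivative^[k] (AP c d k)).eval t * g.eval t =
      (-1 : ℝ) ^ k * ∫ t in c..d, (AP c d k).eval t * (derivative^[k] g).eval t := by
  have key : ∀ i ≤ k, ∫ t in c..d, (derivative^[k] (AP c d k)).eval t * g.eval t =
      (-1 : ℝ) ^ i * ∫ t in c..d,
        (derivative^[k - i] (AP c d k)).eval t * (derivative^[i] g).eval t := by
    intro i
    induction i with
    | zero => intro _; simp
    | succ i ih =>
      intro hi
      rw [ih (Nat.le_of_succ_le hi)]
      have hki : k - i = (k - (i + 1)) + 1 := by omega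
      have hstep : ∫ t in c..d,
          (derivative^[k - i] (AP c d k)).eval t * (derivative^[i] g).eval t
          = - ∫ t in c..d,
            (derivative^[k - (i+1)] (AP c d k)).eval t * (derivative^[i+1] g).eval t := by
        have hD : derivative^[k - i] (AP c d k)
            = derivative (derivative^[k - (i+1)] (AP c d k)) := by
          rw [hki, Function.iterate_succ_apply']
        rw [hD, ibp_poly]
        have hb := AP_eval_boundary c d k (k - (i+1)) (by omega)
        rw [hb.1, hb.2, Function.iterate_succ_apply']
        ring
      rw [hstep, pow_succ]
      ring
  have h := key k le_rfl
  simpa using h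

lemma beta_integral (c d : ℝ) : ∀ (b a : ℕ),
    ∫ t in c..d, (t - c) ^ a * (d - t) ^ b =
      (a.factorial : ℝ) * b.factorial / (a + b + 1).factorial * (d - c) ^ (a + b + 1) := by
  intro b
  induction b with
  | zero =>
    intro a
    have h1 : ∫ t in c..d, (t - c) ^ a * (d - t) ^ 0 = ∫ t in c..d, (t - c) ^ a := by
      simp
    rw [h1]
    have h2 := intervalIntegral.integral_comp_sub_right (a := c) (b := d) (fun s => s ^ a) c
    rw [h2, sub_self, integral_pow]
    simp [Nat.factorial_succ]
    have hfa : (a.factorial : ℝ) ≠ 0 := by exact_mod_cast a.factorial_ne_zero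
    field_simp
  | succ b ih =>
    intro a
    -- IBP : (a+1) I(a, b+1) = (b+1) I(a+1, b)
    have hibp := intervalIntegral.integral_mul_deriv_eq_deriv_mul
      (u := fun t => (d - t) ^ (b + 1)) (v := fun t => (t - c) ^ (a + 1))
      (u' := fun t => -((b + 1) * (d - t) ^ b)) (v' := fun t => (a + 1) * (t - c) ^ a)
      (a := c) (b := d)
      (fun x _ => by
        have h := (((hasDerivAt_id x).const_sub d).fun_pow (b + 1))
        simpa [mul_comm] using h)
      (fun x _ => by
        have h := (((hasDerivAt_id x).sub_const c).fun_pow (a + 1))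
        simpa [mul_comm] using h)
      ((Continuous.neg (by continuity)).intervalIntegrable c d)
      ((by continuity : Continuous fun t : ℝ => ((a : ℝ) + 1) * (t - c) ^ a).intervalIntegrable c d)
    have hL : ∫ t in c..d, (d - t) ^ (b + 1) * (((a : ℝ) + 1) * (t - c) ^ a)
        = ((a : ℝ) + 1) * ∫ t in c..d, (t - c) ^ a * (d - t) ^ (b + 1) := by
      rw [← intervalIntegral.integral_const_mul]
      congr 1; funext t; ring
    have hR : ∫ t in c..d, -(((b : ℝ) + 1) * (d - t) ^ b) * (t - c) ^ (a + 1)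
        = -(((b : ℝ) + 1) * ∫ t in c..d, (t - c) ^ (a + 1) * (d - t) ^ b) := by
      rw [← intervalIntegral.integral_const_mul, ← intervalIntegral.integral_neg]
      congr 1; funext t; ring
    rw [hL, hR] at hibp
    simp only [sub_self, zero_pow (Nat.succ_ne_zero b), zero_pow (Nat.succ_ne_zero a), zero_mul,
      mul_zero, zero_sub, sub_neg_eq_add, neg_neg, zero_add] at hibp
    -- hibp : (a+1) * I(a,b+1) = (b+1) * I(a+1,b)
    have ha1 : ((a : ℝ) + 1) ≠ 0 := by positivity
    have : ∫ t in c..d, (t - c) ^ a * (d - t) ^ (b + 1)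
        = ((b : ℝ) + 1) / ((a : ℝ) + 1) * ∫ t in c..d, (t - c) ^ (a + 1) * (d - t) ^ b := by
      field_simp at hibp ⊢
      linarith [hibp]
    rw [this, ih (a + 1)]
    have hfac : ((a + 1) + b + 1) = (a + (b + 1) + 1) := by omega
    rw [hfac]
    have h2 : ((a + (b + 1) + 1).factorial : ℝ) ≠ 0 := by
      exact_mod_cast (a + (b + 1) + 1).factorial_ne_zero
    push_cast [Nat.factorial_succ]
    field_simp



lemma LP_eval_eq (c d : ℝ) (k : ℕ) (t : ℝ) :
    (LP c d k).eval t = (k.factorial : ℝ)⁻¹ * (derivative^[k] (AP c d k)).eval t := by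
  simp [LP]

lemma LP_ortho (c d : ℝ) (k : ℕ) (g : ℝ[X]) (hg : g.natDegree < k) :
    ∫ t in c..d, (LP c d k).eval t * g.eval t = 0 := by
  simp_rw [LP_eval_eq, mul_assoc]
  rw [intervalIntegral.integral_const_mul, ibp_iter,
    iterate_derivative_eq_zero hg]
  simp

lemma AP_eval (c d : ℝ) (k : ℕ) (t : ℝ) :
    (AP c d k).eval t = (-1 : ℝ) ^ k * ((t - c) ^ k * (d - t) ^ k) := by
  simp only [AP, eval_pow, eval_mul, eval_sub, eval_X, eval_C]
  rw [show (t - c) * (t - d) = (-1) * ((t - c) * (d - t)) by ring, mul_pow, mul_pow]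

lemma AP_integral (c d : ℝ) (k : ℕ) :
    ∫ t in c..d, (AP c d k).eval t =
      (-1 : ℝ) ^ k * ((k.factorial : ℝ) * k.factorial / (2 * k + 1).factorial
        * (d - c) ^ (2 * k + 1)) := by
  simp_rw [AP_eval]
  rw [intervalIntegral.integral_const_mul, beta_integral c d k k]
  norm_num
  rw [show k + k + 1 = 2 * k + 1 by ring]

lemma iterate_derivative_AP_self (c d : ℝ) (k : ℕ) :
    derivative^[2 * k] (AP c d k) = C (((2 * k).factorial : ℝ)) := by
  have hdeg : (derivative^[2 * k] (AP c d k)).natDegree ≤ 0 := by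
    refine (natDegree_iterate_derivative _ _).trans ?_
    rw [AP_natDegree]; omega
  rw [(derivative^[2 * k] (AP c d k)).eq_C_of_natDegree_le_zero hdeg]
  congr 1
  rw [coeff_iterate_derivative]
  have h0 : (AP c d k).coeff (0 + 2 * k) = 1 := by
    rw [zero_add, ← AP_natDegree c d k]
    exact AP_monic c d k
  rw [h0]
  simp [Nat.descFactorial_self]

lemma LP_norm (c d : ℝ) (k : ℕ) :
    ∫ t in c..d, (LP c d k).eval t ^ 2 = (d - c) ^ (2 * k + 1) / (2 * k + 1) := by
  have h1 : ∀ t : ℝ, (LP c d k).eval t ^ 2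
      = ((k.factorial : ℝ)⁻¹)^2 * ((derivative^[k] (AP c d k)).eval t
          * (derivative^[k] (AP c d k)).eval t) := by
    intro t; rw [LP_eval_eq]; ring
  simp_rw [h1]
  rw [intervalIntegral.integral_const_mul]
  have h2 : ∫ t in c..d, (derivative^[k] (AP c d k)).eval t
      * (derivative^[k] (AP c d k)).eval t
      = (-1 : ℝ)^k * ∫ t in c..d, (AP c d k).eval t
          * (derivative^[k] (derivative^[k] (AP c d k))).eval t := by
    exact ibp_iter c d k _
  rw [h2]
  have h3 : derivative^[k] (derivative^[k] (AP c d k)) = derivative^[2*k] (AP c d k) := by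
    rw [← Function.iterate_add_apply]
    congr 1; ring
  rw [h3, iterate_derivative_AP_self]
  simp_rw [eval_C]
  rw [show (∫ t in c..d, (AP c d k).eval t * ((2*k).factorial : ℝ))
      = ((2*k).factorial : ℝ) * ∫ t in c..d, (AP c d k).eval t by
    rw [← intervalIntegral.integral_const_mul]; congr 1; funext t; ring]
  rw [AP_integral]
  have hfk : (k.factorial : ℝ) ≠ 0 := by exact_mod_cast k.factorial_ne_zero
  have hf2k : ((2*k).factorial : ℝ) ≠ 0 := by exact_mod_cast (2*k).factorial_ne_zero
  have hf2k1 : ((2*k+1).factorial : ℝ) ≠ 0 := by exact_mod_cast (2*k+1).factorial_ne_zero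
  have hfs : ((2*k+1).factorial : ℝ) = (2*k+1) * (2*k).factorial := by
    exact_mod_cast Nat.factorial_succ (2*k)
  have hk1 : ((2*k : ℕ) : ℝ) + 1 ≠ 0 := by positivity
  rw [hfs]
  have hneg : ((-1:ℝ)^k)^2 = 1 := by
    rcases Nat.even_or_odd k with he | ho
    · rw [he.neg_one_pow]; norm_num
    · rw [ho.neg_one_pow]; norm_num
  field_simp
  linear_combination hneg * ((d - c)^(2*k+1))

lemma LP_eval_d (c d : ℝ) (k : ℕ) : (LP c d k).eval d = (d - c) ^ k := by
  obtain ⟨Ck, hCk, hev⟩ := factor_iter_deriv d k ((X - C c) ^ k) k le_rfl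
  have hAP : AP c d k = (X - C d) ^ k * (X - C c) ^ k := by
    rw [AP, mul_pow, mul_comm]
  rw [LP_eval_eq, hAP, hCk]
  simp only [Nat.sub_self, pow_zero, one_mul, hev]
  rw [Nat.descFactorial_self]
  have : ((X - C c : ℝ[X]) ^ k).eval d = (d - c)^k := by simp
  rw [this]
  have hfk : (k.factorial : ℝ) ≠ 0 := by exact_mod_cast k.factorial_ne_zero
  field_simp

lemma LP_eval_c (c d : ℝ) (k : ℕ) : (LP c d k).eval c = (c - d) ^ k := by
  obtain ⟨Ck, hCk, hev⟩ := factor_iter_deriv c k ((X - C d) ^ k) k le_rfl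
  have hAP : AP c d k = (X - C c) ^ k * (X - C d) ^ k := by
    rw [AP, mul_pow]
  rw [LP_eval_eq, hAP, hCk]
  simp only [Nat.sub_self, pow_zero, one_mul, hev]
  rw [Nat.descFactorial_self]
  have : ((X - C d : ℝ[X]) ^ k).eval c = (c - d)^k := by simp
  rw [this]
  have hfk : (k.factorial : ℝ) ≠ 0 := by exact_mod_cast k.factorial_ne_zero
  field_simp

lemma LP_deriv_natDegree_lt (c d : ℝ) (j k : ℕ) (hjk : j < k) :
    (derivative (LP c d j)).natDegree < k := by
  have h1 : (derivative (LP c d j)).natDegree ≤ (LP c d j).natDegree - 1 :=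
    natDegree_derivative_le _
  have h2 := LP_natDegree_le c d j
  omega

lemma LP_cross (c d : ℝ) (j k : ℕ) :
    ∫ t in c..d, (derivative (LP c d k)).eval t * (LP c d j).eval t =
      if j < k ∧ Odd (j + k) then 2 * (d - c) ^ (j + k) else 0 := by
  rcases le_or_gt k j with hkj | hjk
  · rw [if_neg (by omega)]
    rcases Nat.eq_zero_or_pos k with rfl | hk
    · have : LP c d 0 = 1 := by simp [LP, AP]
      simp [this]
    · have hdeg : (derivative (LP c d k)).natDegree < j + 1 := by
        have := LP_deriv_natDegree_lt c d k (k+1) (by omega)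
        have h2 : (derivative (LP c d k)).natDegree ≤ (LP c d k).natDegree - 1 :=
          natDegree_derivative_le _
        have h3 := LP_natDegree_le c d k
        omega
      -- k ≤ j: integrand = LP j * (small degree), use ortho after mul_comm
      have hd' : (derivative (LP c d k)).natDegree < j := by
        have h2 : (derivative (LP c d k)).natDegree ≤ (LP c d k).natDegree - 1 :=
          natDegree_derivative_le _
        have h3 := LP_natDegree_le c d k
        omega
      rw [show (∫ t in c..d, (derivative (LP c d k)).eval t * (LP c d j).eval t)
          = ∫ t in c..d, (LP c d j).eval t * (derivative (LP c d k)).eval t by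
        congr 1; funext t; ring]
      exact LP_ortho c d j _ hd'
  · -- j < k
    rw [ibp_poly]
    have hz : ∫ t in c..d, (LP c d k).eval t * (derivative (LP c d j)).eval t = 0 :=
      LP_ortho c d k _ (LP_deriv_natDegree_lt c d j k hjk)
    rw [hz, LP_eval_d, LP_eval_d, LP_eval_c, LP_eval_c]
    have hcd' : ∀ m : ℕ, (c - d : ℝ) ^ m = (-1)^m * (d - c)^m := by
      intro m
      rw [show (c - d : ℝ) = (-1) * (d - c) by ring, mul_pow]
    rw [hcd', hcd']
    rcases Nat.even_or_odd (j + k) with he | ho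
    · rw [if_neg (by rintro ⟨-, hodd⟩; exact (Nat.not_odd_iff_even.mpr he) hodd)]
      have hx : (-1:ℝ)^k * (-1:ℝ)^j = 1 := by
        rw [← pow_add, show k + j = j + k from by ring]
        exact he.neg_one_pow
      linear_combination (-(d-c)^k*(d-c)^j) * hx
    · rw [if_pos ⟨hjk, ho⟩]
      have hx : (-1:ℝ)^k * (-1:ℝ)^j = -1 := by
        rw [← pow_add, show k + j = j + k from by ring]
        exact ho.neg_one_pow
      linear_combination (-(d-c)^k*(d-c)^j) * hx

section Comb
open Finset

lemma sum_odds_real (k : ℕ) : ∑ j ∈ range k, (2 * (j:ℝ) + 1) = (k:ℝ)^2 := by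
  induction k with
  | zero => simp
  | succ k ih => rw [sum_range_succ, ih]; push_cast; ring

lemma sum_odd_filter (k : ℕ) :
    ∑ j ∈ range k, (if Odd (j + k) then (2 * (j:ℝ) + 1) else 0) = (k:ℝ) * (k + 1) / 2 := by
  induction k with
  | zero => simp
  | succ k ih =>
    have hsplit : ∀ j, (if Odd (j + (k+1)) then (2 * (j:ℝ) + 1) else 0)
        = (2 * (j:ℝ) + 1) - (if Odd (j + k) then (2 * (j:ℝ) + 1) else 0) := by
      intro j
      have : Odd (j + (k+1)) ↔ ¬ Odd (j + k) := by
        rw [show j + (k+1) = (j + k) + 1 from by ring, Nat.odd_add_one]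
      rcases Nat.even_or_odd (j + k) with he | ho
      · rw [if_pos (this.mpr (Nat.not_odd_iff_even.mpr he)), if_neg (Nat.not_odd_iff_even.mpr he)]
        ring
      · rw [if_neg (by rw [this]; exact not_not_intro ho), if_pos ho]
        ring
    rw [sum_range_succ]
    simp_rw [hsplit]
    rw [sum_sub_distrib, sum_odds_real, ih]
    rw [if_neg (by simp [Nat.not_odd_iff_even, show k + k = 2 * k from by ring] :
      ¬ Odd (k + k))]
    push_cast
    ring

lemma sum_weight (n : ℕ) :
    ∑ k ∈ range (n+1), (2 * (k:ℝ) + 1) * ((k:ℝ) * (k+1) / 2)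
      = (n:ℝ) * (n+1)^2 * (n+2) / 4 := by
  induction n with
  | zero => simp
  | succ n ih => rw [sum_range_succ, ih]; push_cast; ring

lemma double_sum_bound (m : ℕ) :
    ∑ j ∈ range (m+1), (2 * (j:ℝ) + 1) *
        (∑ k ∈ range (m+1), if j < k ∧ Odd (j + k) then (2 * (k:ℝ) + 1) else 0)
      = (m:ℝ) * (m+1)^2 * (m+2) / 4 := by
  have h1 : ∀ j ∈ range (m+1), (2 * (j:ℝ) + 1) *
        (∑ k ∈ range (m+1), if j < k ∧ Odd (j + k) then (2 * (k:ℝ) + 1) else 0)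
      = ∑ k ∈ range (m+1), (if j < k ∧ Odd (j + k) then (2 * (j:ℝ) + 1) * (2 * (k:ℝ) + 1) else 0) := by
    intro j _
    rw [mul_sum]
    refine sum_congr rfl fun k _ => ?_
    split_ifs <;> ring
  rw [sum_congr rfl h1, sum_comm]
  have h2 : ∀ k ∈ range (m+1),
      (∑ j ∈ range (m+1), if j < k ∧ Odd (j + k) then (2 * (j:ℝ) + 1) * (2 * (k:ℝ) + 1) else 0)
      = (2 * (k:ℝ) + 1) * ((k:ℝ) * (k+1) / 2) := by
    intro k hk
    have hsub : range k ⊆ range (m+1) := by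
      refine range_subset_range.mpr ?_
      simp only [mem_range] at hk; omega
    rw [← sum_subset hsub (by
      intro j hj hj2
      rw [if_neg]
      rintro ⟨hlt, -⟩
      simp only [mem_range] at hj2
      omega)]
    have : ∀ j ∈ range k, (if j < k ∧ Odd (j + k) then (2 * (j:ℝ) + 1) * (2 * (k:ℝ) + 1) else 0)
        = (2 * (k:ℝ) + 1) * (if Odd (j + k) then (2 * (j:ℝ) + 1) else 0) := by
      intro j hj
      simp only [mem_range] at hj
      rcases Nat.even_or_odd (j + k) with he | ho
      · rw [if_neg (by rintro ⟨-, hodd⟩; exact (Nat.not_odd_iff_even.mpr he) hodd),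
          if_neg (Nat.not_odd_iff_even.mpr he)]
        ring
      · rw [if_pos ⟨hj, ho⟩, if_pos ho]; ring
    rw [sum_congr rfl this, ← mul_sum, sum_odd_filter]
  rw [sum_congr rfl h2, sum_weight]

lemma double_sum_le (m : ℕ) (hm : 1 ≤ m) :
    (m:ℝ) * (m+1)^2 * (m+2) / 4 ≤ 3 * (m:ℝ)^4 := by
  have h : (1:ℝ) ≤ (m:ℝ) := by exact_mod_cast hm
  nlinarith [h, sq_nonneg ((m:ℝ) - 1)]

end Comb

section Cell
open Polynomial intervalIntegral Finset

lemma LP_mul_integral (c d : ℝ) (k l : ℕ) :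
    ∫ t in c..d, (LP c d k).eval t * (LP c d l).eval t =
      if k = l then (d - c) ^ (2 * k + 1) / (2 * k + 1) else 0 := by
  rcases lt_trichotomy k l with h | rfl | h
  · rw [if_neg h.ne]
    rw [show (∫ t in c..d, (LP c d k).eval t * (LP c d l).eval t)
        = ∫ t in c..d, (LP c d l).eval t * (LP c d k).eval t by congr 1; funext t; ring]
    exact LP_ortho c d l _ (lt_of_le_of_lt (LP_natDegree_le c d k) h)
  · rw [if_pos rfl]
    simp_rw [← sq]
    exact LP_norm c d k
  · rw [if_neg h.ne']
    exact LP_ortho c d k _ (lt_of_le_of_lt (LP_natDegree_le c d l) h)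

lemma integral_sq_expand (c d : ℝ) (m : ℕ) (co : ℕ → ℝ) :
    ∫ t in c..d, (∑ k ∈ range m, C (co k) * LP c d k).eval t ^ 2
      = ∑ k ∈ range m, (co k)^2 * ((d - c) ^ (2*k+1) / (2*k+1)) := by
  have hev : ∀ t : ℝ, (∑ k ∈ range m, C (co k) * LP c d k).eval t ^ 2
      = ∑ k ∈ range m, ∑ l ∈ range m,
          (co k * co l) * ((LP c d k).eval t * (LP c d l).eval t) := by
    intro t
    rw [eval_finset_sum, sq, sum_mul_sum]
    refine sum_congr rfl fun k _ => sum_congr rfl fun l _ => ?_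
    simp only [eval_mul, eval_C]
    ring
  simp_rw [hev]
  rw [intervalIntegral.integral_finset_sum (fun k _ => by
    apply Continuous.intervalIntegrable
    exact continuous_finset_sum _ (fun l _ =>
      continuous_const.mul ((LP c d k).continuous.mul (LP c d l).continuous)))]
  have hinner : ∀ k ∈ range m,
      (∫ t in c..d, ∑ l ∈ range m,
          (co k * co l) * ((LP c d k).eval t * (LP c d l).eval t))
      = (co k)^2 * ((d - c) ^ (2*k+1) / (2*k+1)) := by
    intro k hk
    rw [intervalIntegral.integral_finset_sum (fun l _ => by
      apply Continuous.intervalIntegrable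
      exact continuous_const.mul ((LP c d k).continuous.mul (LP c d l).continuous))]
    have : ∀ l ∈ range m,
        (∫ t in c..d, (co k * co l) * ((LP c d k).eval t * (LP c d l).eval t))
        = if k = l then (co l)^2 * ((d - c) ^ (2*l+1) / (2*l+1)) else 0 := by
      intro l _
      rw [intervalIntegral.integral_const_mul, LP_mul_integral]
      split_ifs with hkl
      · subst hkl; ring
      · ring
    rw [sum_congr rfl this, sum_ite_eq (range m) k
      (fun l => (co l)^2 * ((d - c) ^ (2*l+1) / (2*l+1))), if_pos hk]
  exact sum_congr rfl hinner

lemma cell_markov (c d : ℝ) (hcd : c < d) (p : ℕ) (hp : 1 ≤ p)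
    (q : ℝ[X]) (hq : q.natDegree ≤ p) :
    ∫ t in c..d, (derivative q).eval t ^ 2
      ≤ 12 * (p:ℝ)^4 / (d - c)^2 * ∫ t in c..d, q.eval t ^ 2 := by
  have hw0 : (0:ℝ) < d - c := sub_pos.mpr hcd
  set w : ℝ := d - c with hw
  obtain ⟨co, hco⟩ := span_LP c d p q hq
  obtain ⟨β, hβ⟩ := span_LP c d p (derivative q)
    ((natDegree_derivative_le q).trans (by omega))
  have hI2 : ∫ t in c..d, q.eval t ^ 2
      = ∑ k ∈ range (p+1), (co k)^2 * (w^(2*k+1)/(2*k+1)) := by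
    rw [hco]; exact integral_sq_expand c d (p+1) co
  have hI2nn : 0 ≤ ∫ t in c..d, q.eval t ^ 2 := by
    rw [hI2]
    refine sum_nonneg fun k _ => ?_
    have : (0:ℝ) < 2*(k:ℝ)+1 := by positivity
    positivity
  have hT : ∫ t in c..d, (derivative q).eval t ^ 2
      = ∑ j ∈ range (p+1), (β j)^2 * (w^(2*j+1)/(2*j+1)) := by
    rw [hβ]; exact integral_sq_expand c d (p+1) β
  -- coefficient identity
  have hkey : ∀ j ∈ range (p+1), β j * (w^(2*j+1)/(2*j+1))
      = ∑ k ∈ range (p+1), co k *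
          (if j < k ∧ Odd (j+k) then 2*w^(j+k) else 0) := by
    intro j hj
    have h1 : (∫ t in c..d, (derivative q).eval t * (LP c d j).eval t)
        = β j * (w^(2*j+1)/(2*j+1)) := by
      conv_lhs => rw [hβ]
      have hev : ∀ t : ℝ, (∑ l ∈ range (p+1), C (β l) * LP c d l).eval t * (LP c d j).eval t
          = ∑ l ∈ range (p+1), β l * ((LP c d l).eval t * (LP c d j).eval t) := by
        intro t
        rw [eval_finset_sum, sum_mul]
        refine sum_congr rfl fun l _ => ?_
        simp only [eval_mul, eval_C]; ring
      simp_rw [hev]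
      rw [intervalIntegral.integral_finset_sum (fun l _ => by
        apply Continuous.intervalIntegrable
        exact continuous_const.mul ((LP c d l).continuous.mul (LP c d j).continuous))]
      have : ∀ l ∈ range (p+1),
          (∫ t in c..d, β l * ((LP c d l).eval t * (LP c d j).eval t))
          = if l = j then β l * (w^(2*l+1)/(2*l+1)) else 0 := by
        intro l _
        rw [intervalIntegral.integral_const_mul, LP_mul_integral]
        split_ifs with hlj
        · rfl
        · ring
      rw [sum_congr rfl this, sum_ite_eq' (range (p+1)) j
        (fun l => β l * (w^(2*l+1)/(2*l+1))), if_pos hj]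
    have h2 : (∫ t in c..d, (derivative q).eval t * (LP c d j).eval t)
        = ∑ k ∈ range (p+1), co k *
            (if j < k ∧ Odd (j+k) then 2*w^(j+k) else 0) := by
      conv_lhs => rw [hco]
      rw [derivative_sum]
      have hev : ∀ t : ℝ,
          (∑ k ∈ range (p+1), derivative (C (co k) * LP c d k)).eval t * (LP c d j).eval t
          = ∑ k ∈ range (p+1), co k *
              ((derivative (LP c d k)).eval t * (LP c d j).eval t) := by
        intro t
        rw [eval_finset_sum, sum_mul]
        refine sum_congr rfl fun k _ => ?_
        rw [derivative_C_mul]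
        simp only [eval_mul, eval_C]; ring
      simp_rw [hev]
      rw [intervalIntegral.integral_finset_sum (fun k _ => by
        apply Continuous.intervalIntegrable
        exact continuous_const.mul ((derivative (LP c d k)).continuous.mul
          (LP c d j).continuous))]
      refine sum_congr rfl fun k _ => ?_
      rw [intervalIntegral.integral_const_mul, LP_cross]
    rw [← h1, h2]
  -- per-term bound
  set I2 : ℝ := ∑ k ∈ range (p+1), (co k)^2 * (w^(2*k+1)/(2*k+1)) with hI2def
  have hI2nn' : 0 ≤ I2 := by rw [← hI2]; exact hI2nn
  have hterm : ∀ j ∈ range (p+1), (β j)^2 * (w^(2*j+1)/(2*j+1))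
      ≤ 4 * (2*(j:ℝ)+1) / w^2 * I2 *
          (∑ k ∈ range (p+1), if j < k ∧ Odd (j+k) then (2*(k:ℝ)+1) else 0) := by
    intro j hj
    have hkeyj := hkey j hj
    have hwj : (0:ℝ) < w^(2*j+1) := by positivity
    have h2j1 : (0:ℝ) < 2*(j:ℝ)+1 := by positivity
    have hsum : ∑ k ∈ range (p+1), co k * (if j < k ∧ Odd (j+k) then 2*w^(j+k) else 0)
        = 2 * w^j * ∑ k ∈ range (p+1), (if j < k ∧ Odd (j+k) then co k * w^k else 0) := by
      rw [mul_sum]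
      refine sum_congr rfl fun k _ => ?_
      split_ifs with hc
      · rw [pow_add]; ring
      · ring
    set S : ℝ := ∑ k ∈ range (p+1), (if j < k ∧ Odd (j+k) then co k * w^k else 0) with hS
    have heq : β j * (w^(2*j+1)/(2*(j:ℝ)+1)) = 2 * w^j * S := by
      rw [hkeyj, hsum]
    have hβj : β j = 2 * w^j * S * ((2*(j:ℝ)+1) / w^(2*j+1)) := by
      field_simp at heq ⊢
      linear_combination heq
    set Tj : ℝ := ∑ k ∈ range (p+1), (if j < k ∧ Odd (j+k) then (2*(k:ℝ)+1) else 0) with hTj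
    have hTjnn : 0 ≤ Tj := by
      refine sum_nonneg fun k _ => ?_
      split_ifs
      · positivity
      · exact le_rfl
    have hCS : S^2 ≤ I2 * (Tj / w) := by
      have hcs := Finset.sum_sq_le_sum_mul_sum_of_sq_eq_mul (range (p+1))
        (r := fun k => if j < k ∧ Odd (j+k) then co k * w^k else 0)
        (f := fun k => (co k)^2 * (w^(2*k+1)/(2*(k:ℝ)+1)))
        (g := fun k => if j < k ∧ Odd (j+k) then (2*(k:ℝ)+1)/w else 0)
        (fun k _ => by
          have : (0:ℝ) < 2*(k:ℝ)+1 := by positivity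
          positivity)
        (fun k _ => by
          split_ifs
          · positivity
          · exact le_rfl)
        (fun k _ => by
          split_ifs with hc
          · have h2k1 : (0:ℝ) < 2*(k:ℝ)+1 := by positivity
            field_simp
            ring
          · simp)
      have hgsum : ∑ k ∈ range (p+1), (if j < k ∧ Odd (j+k) then (2*(k:ℝ)+1)/w else 0)
          = Tj / w := by
        rw [hTj, sum_div]
        refine sum_congr rfl fun k _ => ?_
        split_ifs
        · rfl
        · simp
      rw [hgsum] at hcs
      exact hcs
    have hLHS : (β j)^2 * (w^(2*j+1)/(2*(j:ℝ)+1)) = 4*(2*(j:ℝ)+1)/w * S^2 := by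
      rw [hβj]
      field_simp
      ring
    rw [hLHS]
    have hfac : (0:ℝ) ≤ 4*(2*(j:ℝ)+1)/w := by positivity
    calc 4*(2*(j:ℝ)+1)/w * S^2 ≤ 4*(2*(j:ℝ)+1)/w * (I2 * (Tj/w)) :=
          mul_le_mul_of_nonneg_left hCS hfac
      _ = 4 * (2*(j:ℝ)+1) / w^2 * I2 * Tj := by
          field_simp
  rw [hT, hI2]
  calc ∑ j ∈ range (p+1), (β j)^2 * (w^(2*j+1)/(2*j+1))
      ≤ ∑ j ∈ range (p+1), 4 * (2*(j:ℝ)+1) / w^2 * I2 *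
          (∑ k ∈ range (p+1), if j < k ∧ Odd (j+k) then (2*(k:ℝ)+1) else 0) :=
        sum_le_sum hterm
    _ = 4*I2/w^2 * ∑ j ∈ range (p+1), (2*(j:ℝ)+1) *
          (∑ k ∈ range (p+1), if j < k ∧ Odd (j+k) then (2*(k:ℝ)+1) else 0) := by
        rw [mul_sum]
        exact sum_congr rfl fun j _ => by ring
    _ = 4*I2/w^2 * ((p:ℝ)*(p+1)^2*(p+2)/4) := by rw [double_sum_bound p]
    _ ≤ 12*(p:ℝ)^4/w^2 * I2 := by
        rw [show 4*I2/w^2 * ((p:ℝ)*(p+1)^2*(p+2)/4) = (4*I2*((p:ℝ)*(p+1)^2*(p+2)/4))/w^2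
          from by ring,
          show 12*(p:ℝ)^4/w^2 * I2 = (12*(p:ℝ)^4*I2)/w^2 from by ring]
        rw [div_le_div_iff₀ (by positivity) (by positivity)]
        nlinarith [mul_le_mul_of_nonneg_left (double_sum_le p hp)
          (mul_nonneg hI2nn' (sq_nonneg w))]

end Cell

end SpectralAux

open Polynomial in
/-- (Lower bound in the spectral lemma.)  Let `u` be a continuous
piecewise-polynomial function of degree at most `p ≥ 1` on `[a, b]` (with pieces `Q i` on
the cells `[x i, x (i+1)]` of the partition `a = x 0 < ⋯ < x n = b`), not identically
zero, and let `h` be the minimal cell width.  If `λ > 0` satisfies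
`∫ₐᵇ u² = λ (∑ᵢ ∫ (Qᵢ)'² + (ω²/2) ∫ₐᵇ u²)` with `ω ≥ 0`, then
`λ ≥ 2h²/(24 p⁴ + ω² h²)`. -/
theorem spectral_lower_bound (a b : ℝ) (hab : a < b)
    (n : ℕ) (hn : 0 < n) (x : ℕ → ℝ) (hx0 : x 0 = a) (hxn : x n = b)
    (hmono : ∀ i < n, x i < x (i + 1))
    (h : ℝ)
    (hdef : h = (Finset.range n).inf' (Finset.nonempty_range_iff.mpr hn.ne')
      (fun i => x (i + 1) - x i))
    (p : ℕ) (hp : 1 ≤ p)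
    (u : ℝ → ℝ) (hu : ContinuousOn u (Set.Icc a b))
    (Q : ℕ → Polynomial ℝ)
    (hdeg : ∀ i < n, (Q i).natDegree ≤ p)
    (hQ : ∀ i < n, ∀ t ∈ Set.Icc (x i) (x (i + 1)), u t = (Q i).eval t)
    (hne : ∃ t ∈ Set.Icc a b, u t ≠ 0)
    (ω : ℝ) (hω : 0 ≤ ω) (lam : ℝ) (hlam : 0 < lam)
    (heq : (∫ t in a..b, (u t) ^ 2) =
      lam * ((∑ i ∈ Finset.range n,
          ∫ t in (x i)..(x (i + 1)), ((Q i).derivative.eval t) ^ 2) +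
        (ω ^ 2 / 2) * ∫ t in a..b, (u t) ^ 2)) :
    2 * h ^ 2 / (24 * (p : ℝ) ^ 4 + ω ^ 2 * h ^ 2) ≤ lam := by
  -- h is positive
  have hh0 : 0 < h := by
    rw [hdef]
    rw [Finset.lt_inf'_iff]
    intro i hi
    have := hmono i (Finset.mem_range.mp hi)
    linarith
  have hhle : ∀ i < n, h ≤ x (i + 1) - x i := by
    intro i hi
    rw [hdef]
    exact Finset.inf'_le _ (Finset.mem_range.mpr hi)
  -- monotonicity of the partition
  have hxmono : ∀ j ≤ n, ∀ i ≤ j, x i ≤ x j := by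
    intro j
    induction j with
    | zero =>
      intro _ i hi
      have : i = 0 := Nat.le_zero.mp hi
      subst this; exact le_rfl
    | succ j ih =>
      intro hj i hi
      rcases Nat.lt_or_ge i (j+1) with hlt | hge
      · have h1 : x i ≤ x j := ih (by omega) i (by omega)
        have h2 : x j < x (j+1) := hmono j (by omega)
        linarith
      · have : i = j + 1 := by omega
        subst this; exact le_rfl
  have hxab : ∀ i ≤ n, a ≤ x i ∧ x i ≤ b := by
    intro i hi
    constructor
    · rw [← hx0]; exact hxmono i hi 0 (by omega)
    · rw [← hxn]; exact hxmono n le_rfl i hi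
  have hu2 : ContinuousOn (fun t => u t ^ 2) (Set.Icc a b) := hu.pow 2
  have hcellsub : ∀ i < n, Set.Icc (x i) (x (i+1)) ⊆ Set.Icc a b := by
    intro i hi
    apply Set.Icc_subset_Icc (hxab i (by omega)).1 (hxab (i+1) (by omega)).2
  have hint : ∀ i < n, IntervalIntegrable (fun t => u t ^ 2) MeasureTheory.volume
      (x i) (x (i+1)) := by
    intro i hi
    apply ContinuousOn.intervalIntegrable
    rw [Set.uIcc_of_le (hmono i hi).le]
    exact hu2.mono (hcellsub i hi)
  -- split the integral
  have hsplit : ∑ i ∈ Finset.range n, (∫ t in (x i)..(x (i+1)), u t ^ 2)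
      = ∫ t in a..b, u t ^ 2 := by
    rw [intervalIntegral.sum_integral_adjacent_intervals hint, hx0, hxn]
  -- cell congruence
  have hcellcong : ∀ i < n, (∫ t in (x i)..(x (i+1)), u t ^ 2)
      = ∫ t in (x i)..(x (i+1)), (Q i).eval t ^ 2 := by
    intro i hi
    apply intervalIntegral.integral_congr
    intro t ht
    rw [Set.uIcc_of_le (hmono i hi).le] at ht
    simp only
    rw [hQ i hi t ht]
  -- per-cell Markov bound
  have hcell : ∀ i ∈ Finset.range n,
      (∫ t in (x i)..(x (i+1)), ((Q i).derivative.eval t) ^ 2)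
      ≤ 12 * (p:ℝ)^4 / h^2 * ∫ t in (x i)..(x (i+1)), u t ^ 2 := by
    intro i hi
    have hi' := Finset.mem_range.mp hi
    have hcm := cell_markov (x i) (x (i+1)) (hmono i hi') p hp (Q i) (hdeg i hi')
    have hQnn : 0 ≤ ∫ t in (x i)..(x (i+1)), (Q i).eval t ^ 2 :=
      intervalIntegral.integral_nonneg (hmono i hi').le (fun t _ => sq_nonneg _)
    have hwi : h ≤ x (i+1) - x i := hhle i hi'
    have hconst : 12 * (p:ℝ)^4 / (x (i+1) - x i)^2 ≤ 12 * (p:ℝ)^4 / h^2 := by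
      apply div_le_div_of_nonneg_left (by positivity) (by positivity)
      exact pow_le_pow_left₀ hh0.le hwi 2
    calc (∫ t in (x i)..(x (i+1)), ((Q i).derivative.eval t) ^ 2)
        ≤ 12 * (p:ℝ)^4 / (x (i+1) - x i)^2 * ∫ t in (x i)..(x (i+1)), (Q i).eval t ^ 2 := hcm
      _ ≤ 12 * (p:ℝ)^4 / h^2 * ∫ t in (x i)..(x (i+1)), (Q i).eval t ^ 2 :=
          mul_le_mul_of_nonneg_right hconst hQnn
      _ = 12 * (p:ℝ)^4 / h^2 * ∫ t in (x i)..(x (i+1)), u t ^ 2 := by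
          rw [hcellcong i hi']
  -- sum bound
  set S : ℝ := ∑ i ∈ Finset.range n,
    ∫ t in (x i)..(x (i + 1)), ((Q i).derivative.eval t) ^ 2 with hSdef
  set I : ℝ := ∫ t in a..b, u t ^ 2 with hIdef
  have hS : S ≤ 12 * (p:ℝ)^4 / h^2 * I := by
    rw [hSdef]
    calc (∑ i ∈ Finset.range n, ∫ t in (x i)..(x (i + 1)), ((Q i).derivative.eval t) ^ 2)
        ≤ ∑ i ∈ Finset.range n, 12 * (p:ℝ)^4 / h^2 * ∫ t in (x i)..(x (i+1)), u t ^ 2 :=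
          Finset.sum_le_sum hcell
      _ = 12 * (p:ℝ)^4 / h^2 * ∑ i ∈ Finset.range n, ∫ t in (x i)..(x (i+1)), u t ^ 2 := by
          rw [Finset.mul_sum]
      _ = 12 * (p:ℝ)^4 / h^2 * I := by rw [hsplit]
  -- positivity of I
  have hI0 : 0 < I := by
    obtain ⟨t₀, ht₀, hut₀⟩ := hne
    have hf0 : 0 < u t₀ ^ 2 := by positivity
    have hcw : ContinuousWithinAt (fun t => u t ^ 2) (Set.Icc a b) t₀ := hu2 t₀ ht₀
    rw [Metric.continuousWithinAt_iff] at hcw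
    obtain ⟨δ, hδ0, hδ⟩ := hcw (u t₀ ^ 2 / 2) (by positivity)
    set c' : ℝ := max a (t₀ - δ/2) with hc'
    set d' : ℝ := min b (t₀ + δ/2) with hd'
    have hac' : a ≤ c' := le_max_left _ _
    have hd'b : d' ≤ b := min_le_left _ _
    have ht₀ab := ht₀
    rw [Set.mem_Icc] at ht₀ab
    have hc'd' : c' < d' := by
      rw [hc', hd']
      rw [max_lt_iff]  -- max < min
      constructor
      · rw [lt_min_iff]; constructor
        · exact hab
        · linarith [ht₀ab.1]
      · rw [lt_min_iff]; constructor
        · linarith [ht₀ab.2]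
        · linarith
    have hposon : ∀ y ∈ Set.Ioo c' d', 0 < u y ^ 2 := by
      intro y hy
      have hyab : y ∈ Set.Icc a b := by
        constructor
        · linarith [hy.1, hac']
        · linarith [hy.2, hd'b]
      have hdist : dist y t₀ < δ := by
        rw [Real.dist_eq, abs_lt]
        constructor
        · have := hy.1
          have h2 : t₀ - δ/2 ≤ c' := le_max_right _ _
          linarith
        · have := hy.2
          have h2 : d' ≤ t₀ + δ/2 := min_le_right _ _
          linarith
      have := hδ hyab hdist
      rw [Real.dist_eq, abs_lt] at this
      have h3 : u t₀ ^ 2 / 2 < u y ^ 2 := by linarith [this.1]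
      linarith
    have hint1 : IntervalIntegrable (fun t => u t ^ 2) MeasureTheory.volume a c' := by
      apply ContinuousOn.intervalIntegrable
      rw [Set.uIcc_of_le hac']
      exact hu2.mono (Set.Icc_subset_Icc le_rfl (by linarith))
    have hint2 : IntervalIntegrable (fun t => u t ^ 2) MeasureTheory.volume c' d' := by
      apply ContinuousOn.intervalIntegrable
      rw [Set.uIcc_of_le hc'd'.le]
      exact hu2.mono (Set.Icc_subset_Icc hac' hd'b)
    have hint3 : IntervalIntegrable (fun t => u t ^ 2) MeasureTheory.volume d' b := by
      apply ContinuousOn.intervalIntegrable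
      rw [Set.uIcc_of_le hd'b]
      exact hu2.mono (Set.Icc_subset_Icc (by linarith) le_rfl)
    have hmid : 0 < ∫ t in c'..d', u t ^ 2 :=
      intervalIntegral.intervalIntegral_pos_of_pos_on hint2 hposon hc'd'
    have houter1 : 0 ≤ ∫ t in a..c', u t ^ 2 :=
      intervalIntegral.integral_nonneg hac' (fun t _ => sq_nonneg _)
    have houter2 : 0 ≤ ∫ t in d'..b, u t ^ 2 :=
      intervalIntegral.integral_nonneg hd'b (fun t _ => sq_nonneg _)
    have hsplit2 : I = (∫ t in a..c', u t ^ 2) + (∫ t in c'..d', u t ^ 2)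
        + (∫ t in d'..b, u t ^ 2) := by
      rw [hIdef]
      rw [add_assoc, intervalIntegral.integral_add_adjacent_intervals hint2 hint3,
        intervalIntegral.integral_add_adjacent_intervals hint1 (hint2.trans hint3)]
    rw [hsplit2]
    linarith
  -- final algebra
  have heq' : I = lam * S + lam * (ω^2/2) * I := by
    rw [hIdef, hSdef]
    linear_combination heq
  have hS2 : S * h^2 ≤ 12 * (p:ℝ)^4 * I := by
    have := mul_le_mul_of_nonneg_right hS (sq_nonneg h)
    calc S * h^2 ≤ 12 * (p:ℝ)^4 / h^2 * I * h^2 := this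
      _ = 12 * (p:ℝ)^4 * I := by field_simp
  have hIh : h^2 ≤ lam * (12*(p:ℝ)^4 + ω^2*h^2/2) := by
    have h1 : I * h^2 ≤ lam * (12*(p:ℝ)^4 + ω^2*h^2/2) * I := by
      have h2 : I * h^2 = lam * (S * h^2) + lam * (ω^2/2) * I * h^2 := by
        linear_combination h^2 * heq'
      have h3 : lam * (S * h^2) ≤ lam * (12 * (p:ℝ)^4 * I) :=
        mul_le_mul_of_nonneg_left hS2 hlam.le
      nlinarith [h2, h3]
    have := (mul_le_mul_iff_of_pos_right hI0).mp (by linarith [h1] : h^2 * I ≤ lam * (12*(p:ℝ)^4 + ω^2*h^2/2) * I)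
    exact this
  have hp1 : (1:ℝ) ≤ (p:ℝ) := by exact_mod_cast hp
  have hden : 0 < 24*(p:ℝ)^4 + ω^2*h^2 := by nlinarith [sq_nonneg (ω*h)]
  rw [div_le_iff₀ hden]
  have h2 := mul_le_mul_of_nonneg_left hIh (by norm_num : (0:ℝ) ≤ 2)
  calc 2 * h^2 ≤ 2 * (lam * (12*(p:ℝ)^4 + ω^2*h^2/2)) := h2
    _ = lam * (24*(p:ℝ)^4 + ω^2*h^2) := by ring
end

section
/- For every natural number k and every real x, (−1)ᵏ / (2^{k+1} (k+1)!) · (d/dx)ᵏ [(1 − x²)^{k+1}] = (P_k(x) − P_{k+2}(x)) / (2k + 3), where P_k is the k-th Legendre polynomial. Equivalently, the integrated Legendre (bubble) function W_k defined as the weighted Jacobi polynomial (1−x²)P_k^{(1,1)}(x)/(2(k+1)) coincides with (P_k − P_{k+2})/(2k+3). -/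
open Polynomial

private lemma iter_add (k : ℕ) (p q : Polynomial ℝ) :
    derivative^[k] (p + q) = derivative^[k] p + derivative^[k] q := by
  induction k generalizing p q with
  | zero => simp
  | succ n ih => simp [Function.iterate_succ_apply, derivative_add, ih]

private lemma d2 (k : ℕ) : derivative (derivative ((X ^ 2 - 1 : Polynomial ℝ) ^ (k + 2))) =
    C (((k : ℝ) + 2) * (4 * k + 6)) * (X ^ 2 - 1) ^ (k + 1) +
      C (4 * ((k : ℝ) + 2) * (k + 1)) * (X ^ 2 - 1) ^ k := by
  simp only [derivative_pow, derivative_sub, derivative_X_pow, derivative_one, derivative_mul,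
    derivative_C, derivative_X, derivative_zero, Nat.add_sub_cancel]
  push_cast
  simp only [C_add, C_mul, map_ofNat, C_1, C_0]
  ring

/-- The `k`-th Legendre polynomial, via Rodrigues' formula
`P_k = 1/(2^k k!) (d/dx)^k (x² − 1)^k`. -/
noncomputable def legendre (k : ℕ) : Polynomial ℝ :=
  C (1 / (2 ^ k * (k.factorial : ℝ))) * derivative^[k] ((X ^ 2 - 1) ^ k)

/-- The Rodrigues-type formula for the integrated Legendre (bubble)
function: `(−1)ᵏ/(2^{k+1}(k+1)!) (d/dx)ᵏ (1 − x²)^{k+1} = (P_k(x) − P_{k+2}(x))/(2k+3)`. -/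
theorem bubble_rodrigues (k : ℕ) (x : ℝ) :
    ((-1 : ℝ) ^ k / (2 ^ (k + 1) * ((k + 1).factorial : ℝ))) *
      (derivative^[k] ((1 - X ^ 2) ^ (k + 1)) : Polynomial ℝ).eval x =
    ((legendre k).eval x - (legendre (k + 2)).eval x) / (2 * (k : ℝ) + 3) := by
  set a := ((derivative^[k] ((X ^ 2 - 1 : Polynomial ℝ) ^ (k + 1))).eval x) with ha
  set b := ((derivative^[k] ((X ^ 2 - 1 : Polynomial ℝ) ^ k)).eval x) with hb
  have h1 : ((1 - X ^ 2 : Polynomial ℝ) ^ (k + 1)) =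
      C ((-1 : ℝ) ^ (k + 1)) * (X ^ 2 - 1) ^ (k + 1) := by
    rw [show (1 - X ^ 2 : Polynomial ℝ) = -(X ^ 2 - 1) by ring, neg_pow]
    simp [map_pow]
  have hL : (derivative^[k] ((1 - X ^ 2) ^ (k + 1)) : Polynomial ℝ).eval x
      = (-1 : ℝ) ^ (k + 1) * a := by
    rw [h1, iterate_derivative_C_mul, eval_mul, eval_C]
  have hk2 : (derivative^[k + 2] ((X ^ 2 - 1 : Polynomial ℝ) ^ (k + 2))).eval x
      = ((k : ℝ) + 2) * (4 * k + 6) * a + 4 * ((k : ℝ) + 2) * ((k : ℝ) + 1) * b := by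
    have h2 : derivative^[k + 2] ((X ^ 2 - 1 : Polynomial ℝ) ^ (k + 2))
        = derivative^[k] (derivative (derivative ((X ^ 2 - 1) ^ (k + 2)))) := by
      rw [Function.iterate_add_apply derivative k 2]
      rfl
    rw [h2, d2, iter_add, iterate_derivative_C_mul, iterate_derivative_C_mul,
      eval_add, eval_mul, eval_mul, eval_C, eval_C]
  have e1 : (((k + 1).factorial : ℕ) : ℝ) = ((k : ℝ) + 1) * (k.factorial : ℝ) := by
    push_cast [Nat.factorial_succ]; ring
  have e2 : (((k + 2).factorial : ℕ) : ℝ) =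
      ((k : ℝ) + 2) * ((k : ℝ) + 1) * (k.factorial : ℝ) := by
    push_cast [Nat.factorial_succ]; ring
  have hf : (k.factorial : ℝ) ≠ 0 := Nat.cast_ne_zero.mpr k.factorial_ne_zero
  have h2k : (2 : ℝ) ^ k ≠ 0 := by positivity
  have h3 : (2 * (k : ℝ) + 3) ≠ 0 := by positivity
  have hk1 : ((k : ℝ) + 1) ≠ 0 := by positivity
  have hk2' : ((k : ℝ) + 2) ≠ 0 := by positivity
  have p1 : (2 : ℝ) ^ (k + 1) = 2 * 2 ^ k := by ring
  have p2 : (2 : ℝ) ^ (k + 2) = 4 * 2 ^ k := by ring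
  rw [hL]
  simp only [legendre, eval_mul, eval_C]
  rw [hk2, e1, e2, p1, p2, pow_succ (-1 : ℝ) k]
  rcases neg_one_pow_eq_or ℝ k with h | h <;> rw [h] <;> field_simp <;> ring
end

section
/- For all natural numbers k and j, the derivatives of the integrated Legendre functions satisfy ∫_{−1}^{1} W_k'(x) · W_j'(x) dx = (2/(2k+3)) if k = j, and 0 otherwise. In other words, the weak Laplacian discretised in the integrated Legendre basis is the diagonal matrix with entries 2/(2k+3). -/
open Polynomial

noncomputable abbrev fpow (n : ℕ) : Polynomial ℝ := (X ^ 2 - 1) ^ n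

lemma deriv_fpow (n : ℕ) : derivative (fpow (n + 1)) = C (2 * ((n : ℝ) + 1)) * (X * fpow n) := by
  simp [fpow, derivative_pow, derivative_sub, derivative_X_pow, map_ofNat]
  ring

lemma itX (g : Polynomial ℝ) (k : ℕ) : derivative^[k + 1] (X * g) =
    X * derivative^[k + 1] g + C ((k : ℝ) + 1) * derivative^[k] g := by
  induction k with
  | zero => simp [derivative_mul]; ring
  | succ k ih =>
    rw [Function.iterate_succ_apply', ih]
    push_cast
    simp only [derivative_mul, derivative_add, derivative_C, derivative_X, derivative_one, map_add,
      map_ofNat, map_one]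
    simp only [← Function.iterate_succ_apply' derivative, Nat.succ_eq_add_one,
      show 1 + k = k + 1 from Nat.add_comm 1 k, show 2 + k = k + 2 from Nat.add_comm 2 k]
    ring

lemma itQ (g : Polynomial ℝ) (k : ℕ) : derivative^[k + 2] ((X ^ 2 - 1) * g) =
    (X ^ 2 - 1) * derivative^[k + 2] g + C (2 * ((k : ℝ) + 2)) * (X * derivative^[k + 1] g)
      + C (((k : ℝ) + 2) * ((k : ℝ) + 1)) * derivative^[k] g := by
  induction k with
  | zero =>
    simp only [show (0:ℕ) + 2 = 2 from rfl, show (0:ℕ) + 1 = 1 from rfl]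
    simp [derivative_mul, derivative_sub, derivative_X_pow, map_ofNat]
    ring
  | succ k ih =>
    rw [Function.iterate_succ_apply', ih]
    push_cast
    simp only [derivative_mul, derivative_add, derivative_sub, derivative_C, derivative_X,
      derivative_one, derivative_ofNat, derivative_X_pow, map_add, map_mul, map_ofNat, map_one]
    simp only [← Function.iterate_succ_apply' derivative, Nat.succ_eq_add_one,
      show 1 + k = k + 1 from Nat.add_comm 1 k, show 2 + k = k + 2 from Nat.add_comm 2 k,
      show 3 + k = k + 3 from Nat.add_comm 3 k, map_ofNat, map_natCast]

    push_cast
    ring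

lemma deriv_fpow' (n : ℕ) :
    derivative^[n + 2] (fpow (n + 1)) =
      C (2 * ((n : ℝ) + 1)) * (X * derivative^[n + 1] (fpow n)
        + C ((n : ℝ) + 1) * derivative^[n] (fpow n)) := by
  have h : derivative^[n + 2] (fpow (n + 1)) = derivative^[n + 1] (derivative (fpow (n + 1))) := by
    rw [← Function.iterate_succ_apply derivative]
  rw [h, deriv_fpow, iterate_derivative_C_mul, itX]

lemma itsucc (k : ℕ) (p : Polynomial ℝ) :
    derivative^[k + 1] p = derivative^[k] (derivative p) :=
  Function.iterate_succ_apply derivative k p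

/-- Key identity: `(X²-1) D^{m+2} f_{m+1} = (m+1)(m+2) D^m f_{m+1}`. -/
lemma key (m : ℕ) : (X ^ 2 - 1) * derivative^[m + 2] (fpow (m + 1)) =
    C (((m : ℝ) + 1) * ((m : ℝ) + 2)) * derivative^[m] (fpow (m + 1)) := by
  have e1 : derivative^[m + 2] (fpow (m + 2)) =
      (X ^ 2 - 1) * derivative^[m + 2] (fpow (m + 1))
        + C (2 * ((m : ℝ) + 2)) * (X * derivative^[m + 1] (fpow (m + 1)))
        + C (((m : ℝ) + 2) * ((m : ℝ) + 1)) * derivative^[m] (fpow (m + 1)) := by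
    have : fpow (m + 2) = (X ^ 2 - 1) * fpow (m + 1) := by rw [fpow, pow_succ]; ring
    rw [this, itQ]
  have e2 : derivative^[m + 2] (fpow (m + 2)) =
      C (2 * ((m : ℝ) + 2)) * (X * derivative^[m + 1] (fpow (m + 1))
        + C ((m : ℝ) + 1) * derivative^[m] (fpow (m + 1))) := by
    rw [show m + 2 = (m + 1) + 1 from rfl, itsucc, deriv_fpow (m + 1),
      iterate_derivative_C_mul, itX]
    push_cast
    ring_nf
  have h := e1.symm.trans e2
  simp only [map_mul, map_add, map_ofNat, map_one] at h ⊢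
  linear_combination h

/-- Identity (B): `X D^{n+3} f_{n+2} − 2(n+2) D^{n+2} f_{n+1} = (n+2) D^{n+2} f_{n+2}`. -/
lemma identB (n : ℕ) :
    X * derivative^[n + 3] (fpow (n + 2))
      - C (2 * ((n : ℝ) + 2)) * derivative^[n + 2] (fpow (n + 1))
      = C ((n : ℝ) + 2) * derivative^[n + 2] (fpow (n + 2)) := by
  have h1 : derivative^[n + 3] (fpow (n + 2)) =
      C (2 * ((n : ℝ) + 2)) * (X * derivative^[n + 2] (fpow (n + 1))
        + C ((n : ℝ) + 2) * derivative^[n + 1] (fpow (n + 1))) := by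
    rw [show n + 3 = (n + 2) + 1 from rfl, itsucc, deriv_fpow (n + 1),
      iterate_derivative_C_mul, itX]
    push_cast
    ring_nf
  have h2 := key n
  have h7 : derivative^[n + 2] (fpow (n + 2)) =
      C (2 * ((n : ℝ) + 2)) * (X * derivative^[n + 1] (fpow (n + 1))
        + C ((n : ℝ) + 1) * derivative^[n] (fpow (n + 1))) := by
    rw [show n + 2 = (n + 1) + 1 from rfl, itsucc, deriv_fpow (n + 1),
      iterate_derivative_C_mul, itX]
    push_cast
    ring_nf
  simp only [map_mul, map_add, map_ofNat, map_one] at h1 h2 h7 ⊢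
  linear_combination X * h1 + (2 * (C (n:ℝ) + 2)) * h2 - ((C (n:ℝ) + 2)) * h7

/-- The `k`-th integrated Legendre (bubble) function
`W_k = (P_k − P_{k+2})/(2k+3)`, as a polynomial. -/
noncomputable def bubbleW (k : ℕ) : Polynomial ℝ :=
  C (1 / (2 * (k : ℝ) + 3)) * (legendre k - legendre (k + 2))

noncomputable def cL (k : ℕ) : ℝ := 1 / (2 ^ k * (k.factorial : ℝ))

lemma legendre_eq (k : ℕ) : legendre k = C (cL k) * derivative^[k] (fpow k) := rfl

lemma cL_succ (n : ℕ) : cL (n + 1) * (2 * ((n : ℝ) + 1)) = cL n := by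
  simp only [cL, Nat.factorial_succ, pow_succ]
  push_cast
  have h1 : (2:ℝ) ^ n ≠ 0 := by positivity
  have h2 : ((n.factorial : ℝ)) ≠ 0 := by exact_mod_cast n.factorial_ne_zero
  field_simp

lemma legendre_deriv (n : ℕ) :
    derivative (legendre n) = C (cL n) * derivative^[n + 1] (fpow n) := by
  rw [legendre_eq, derivative_C_mul, ← Function.iterate_succ_apply' derivative]

lemma legendre_zero' : legendre 0 = 1 := by
  simp [legendre_eq, cL, fpow]

lemma legendre_one' : legendre 1 = X := by
  rw [legendre_eq]
  simp only [cL, fpow, pow_one, Function.iterate_one, derivative_sub, derivative_one,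
    derivative_X_pow, Nat.factorial_one]
  norm_num
  rw [← mul_assoc, ← C_mul]
  norm_num

/-- Identity (a): `P_{n+1}' = X P_n' + (n+1) P_n`. -/
lemma identA' (n : ℕ) : derivative (legendre (n + 1)) =
    X * derivative (legendre n) + C ((n : ℝ) + 1) * legendre n := by
  rw [legendre_deriv (n + 1), deriv_fpow', legendre_deriv n, legendre_eq n]
  have hC := congrArg C (cL_succ n)
  simp only [map_mul, map_add, map_ofNat, map_one] at hC ⊢
  linear_combination (X * derivative^[n + 1] (fpow n)
    + (C (n:ℝ) + 1) * derivative^[n] (fpow n)) * hC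

/-- Identity (b): `X P_{n+1}' − P_n' = (n+1) P_{n+1}`. -/
lemma identb (n : ℕ) : X * derivative (legendre (n + 1)) - derivative (legendre n) =
    C ((n : ℝ) + 1) * legendre (n + 1) := by
  cases n with
  | zero =>
    rw [legendre_zero', legendre_one']
    simp
  | succ m =>
    have hB := identB m
    have e1 := legendre_deriv (m + 2)
    have e2 := legendre_deriv (m + 1)
    have e3 := legendre_eq (m + 2)
    have hC := congrArg C (cL_succ (m + 1))
    rw [show m + 1 + 1 = m + 2 from rfl] at hC ⊢
    rw [show m + 2 + 1 = m + 3 from rfl] at e1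
    rw [show m + 1 + 1 = m + 2 from rfl] at e2
    push_cast at hC e1 e2 e3 hB ⊢
    rw [e1, e2, e3]
    simp only [map_mul, map_add, map_ofNat, map_one] at hB hC ⊢
    linear_combination C (cL (m + 2)) * hB + derivative^[m + 2] (fpow (m + 1)) * hC

/-- `P_{n+2}' − P_n' = (2n+3) P_{n+1}`. -/
lemma legendre_deriv_sub (n : ℕ) : derivative (legendre (n + 2)) - derivative (legendre n) =
    C (2 * (n : ℝ) + 3) * legendre (n + 1) := by
  have ha := identA' (n + 1)
  have hb := identb n
  rw [show n + 1 + 1 = n + 2 from rfl] at ha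
  push_cast at ha hb ⊢
  rw [ha]
  simp only [map_add, map_mul, map_ofNat, map_one] at hb ⊢
  linear_combination hb

/-- `W_k' = −P_{k+1}`. -/
lemma bubbleW_deriv (k : ℕ) : derivative (bubbleW k) = -legendre (k + 1) := by
  rw [bubbleW, derivative_C_mul, derivative_sub]
  rw [show derivative (legendre k) - derivative (legendre (k + 2))
      = -(derivative (legendre (k + 2)) - derivative (legendre k)) by ring,
    legendre_deriv_sub k]
  rw [mul_neg, ← mul_assoc, ← C_mul]
  have h : (2 * (k : ℝ) + 3) ≠ 0 := by positivity
  rw [one_div, inv_mul_cancel₀ h, map_one, one_mul]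

open intervalIntegral in
lemma poly_ibp (p q : Polynomial ℝ) :
    ∫ x in (-1:ℝ)..1, (derivative p).eval x * q.eval x =
      p.eval 1 * q.eval 1 - p.eval (-1) * q.eval (-1)
        - ∫ x in (-1:ℝ)..1, p.eval x * (derivative q).eval x := by
  have h := intervalIntegral.integral_mul_deriv_eq_deriv_mul
    (u := fun x => q.eval x) (v := fun x => p.eval x)
    (u' := fun x => (derivative q).eval x) (v' := fun x => (derivative p).eval x)
    (a := (-1:ℝ)) (b := 1)
    (fun x _ => q.hasDerivAt x) (fun x _ => p.hasDerivAt x)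
    ((q.derivative.continuous).intervalIntegrable _ _)
    ((p.derivative.continuous).intervalIntegrable _ _)
  simp only [mul_comm] at h ⊢
  rw [h]

lemma fpow_boundary {n i : ℕ} (h : i < n) {x : ℝ} (hx : x ^ 2 = 1) :
    (derivative^[i] (fpow n)).eval x = 0 := by
  obtain ⟨r, hr⟩ := pow_sub_dvd_iterate_derivative_pow (X ^ 2 - 1 : Polynomial ℝ) n i
  rw [fpow, hr, eval_mul, eval_pow, eval_sub, eval_pow, eval_X, eval_one, hx, sub_self,
    zero_pow (by omega), zero_mul]

lemma ibp_iter_s16 (n : ℕ) (q : Polynomial ℝ) :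
    ∀ i, i ≤ n → (∫ x in (-1:ℝ)..1, (derivative^[n] (fpow n)).eval x * q.eval x) =
      (-1 : ℝ) ^ i * ∫ x in (-1:ℝ)..1,
        (derivative^[n - i] (fpow n)).eval x * (derivative^[i] q).eval x := by
  intro i
  induction i with
  | zero => simp
  | succ i ih =>
    intro hi
    rw [ih (by omega)]
    have hd : derivative^[n - i] (fpow n) = derivative (derivative^[n - i - 1] (fpow n)) := by
      rw [← Function.iterate_succ_apply' derivative]
      congr 1
      omega
    rw [hd, poly_ibp, fpow_boundary (by omega : n - i - 1 < n) (by norm_num),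
      fpow_boundary (by omega : n - i - 1 < n) (by norm_num)]
    rw [← Function.iterate_succ_apply' derivative, show n - i - 1 = n - (i + 1) by omega]
    push_cast
    ring

lemma poly_ftc (p : Polynomial ℝ) (a b : ℝ) :
    ∫ x in a..b, (derivative p).eval x = p.eval b - p.eval a :=
  intervalIntegral.integral_eq_sub_of_hasDerivAt (fun x _ => p.hasDerivAt x)
    ((p.derivative.continuous).intervalIntegrable _ _)

lemma fpow_rec (n : ℕ) : derivative (X * fpow (n + 1)) =
    C (2 * (n : ℝ) + 3) * fpow (n + 1) + C (2 * (n : ℝ) + 2) * fpow n := by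
  rw [derivative_mul, derivative_X, deriv_fpow n]
  have hf : fpow (n + 1) = (X ^ 2 - 1) * fpow n := by rw [fpow, fpow, pow_succ]; ring
  rw [hf]
  simp only [map_add, map_mul, map_ofNat, map_one]
  ring

lemma intf (n : ℕ) : ∫ x in (-1:ℝ)..1, (fpow n).eval x =
    (-1 : ℝ) ^ n * 2 ^ (2 * n + 1) * ((n.factorial : ℝ)) ^ 2 / ((2 * n + 1).factorial : ℝ) := by
  induction n with
  | zero => simp [fpow]; norm_num
  | succ n ih =>
    have h0 : (∫ x in (-1:ℝ)..1, (derivative (X * fpow (n + 1))).eval x) = 0 := by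
      rw [poly_ftc]
      have e1 : (fpow (n+1)).eval 1 = 0 := by
        rw [fpow, eval_pow, eval_sub, eval_pow, eval_X, eval_one]; norm_num
      have e2 : (fpow (n+1)).eval (-1) = 0 := by
        rw [fpow, eval_pow, eval_sub, eval_pow, eval_X, eval_one]; norm_num
      rw [eval_mul, eval_mul, e1, e2]
      ring
    rw [fpow_rec] at h0
    have hsplit : (∫ x in (-1:ℝ)..1,
        (C (2 * (n : ℝ) + 3) * fpow (n + 1) + C (2 * (n : ℝ) + 2) * fpow n).eval x)
        = (2 * (n : ℝ) + 3) * (∫ x in (-1:ℝ)..1, (fpow (n + 1)).eval x)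
          + (2 * (n : ℝ) + 2) * (∫ x in (-1:ℝ)..1, (fpow n).eval x) := by
      simp only [eval_add, eval_mul, eval_C]
      rw [intervalIntegral.integral_add
          (f := fun x => (2 * (n : ℝ) + 3) * (fpow (n + 1)).eval x)
          (g := fun x => (2 * (n : ℝ) + 2) * (fpow n).eval x)
          ((continuous_const.mul (fpow (n+1)).continuous).intervalIntegrable _ _)
          ((continuous_const.mul (fpow n).continuous).intervalIntegrable _ _),
        intervalIntegral.integral_const_mul, intervalIntegral.integral_const_mul]
    rw [hsplit, ih] at h0
    have h3 : (2 * (n : ℝ) + 3) ≠ 0 := by positivity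
    have hI : (∫ x in (-1:ℝ)..1, (fpow (n + 1)).eval x)
        = -(2 * (n : ℝ) + 2) / (2 * (n : ℝ) + 3)
          * ((-1 : ℝ) ^ n * 2 ^ (2 * n + 1) * ((n.factorial : ℝ)) ^ 2
            / ((2 * n + 1).factorial : ℝ)) := by
      field_simp at h0 ⊢
      linarith [h0]
    rw [hI]
    have hf1 : ((2 * (n + 1) + 1).factorial : ℝ)
        = (2 * (n : ℝ) + 3) * ((2 * (n : ℝ) + 2) * ((2 * n + 1).factorial : ℝ)) := by
      rw [show 2 * (n + 1) + 1 = (2 * n + 1) + 1 + 1 by ring, Nat.factorial_succ,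
        Nat.factorial_succ]
      push_cast
      ring
    have hf2 : (((n + 1).factorial : ℝ)) = ((n : ℝ) + 1) * (n.factorial : ℝ) := by
      rw [Nat.factorial_succ]; push_cast; ring
    rw [hf1, hf2]
    have hfacne : ((2 * n + 1).factorial : ℝ) ≠ 0 := by
      exact_mod_cast (2 * n + 1).factorial_ne_zero
    have h2 : (2 * (n : ℝ) + 2) ≠ 0 := by positivity
    push_cast
    field_simp
    ring

lemma natDegree_legendre_le (m : ℕ) : (legendre m).natDegree ≤ m := by
  rw [legendre_eq]
  refine le_trans (natDegree_C_mul_le _ _) (le_trans (natDegree_iterate_derivative _ _) ?_)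
  have h2 : (fpow m).natDegree ≤ 2 * m := by
    refine le_trans (natDegree_pow_le) ?_
    have : (X ^ 2 - 1 : Polynomial ℝ).natDegree ≤ 2 :=
      le_trans (natDegree_sub_le _ _) (by simp)
    nlinarith
  omega

lemma int_legendre_mul_eq_zero {n : ℕ} (q : Polynomial ℝ) (hq : q.natDegree < n) :
    (∫ x in (-1:ℝ)..1, (legendre n).eval x * q.eval x) = 0 := by
  have h : (∫ x in (-1:ℝ)..1, (legendre n).eval x * q.eval x)
      = cL n * ∫ x in (-1:ℝ)..1, (derivative^[n] (fpow n)).eval x * q.eval x := by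
    rw [← intervalIntegral.integral_const_mul]
    congr 1
    ext x
    rw [legendre_eq, eval_mul, eval_C, mul_assoc]
  rw [h, ibp_iter_s16 n q n le_rfl, iterate_derivative_eq_zero hq]
  simp

lemma iterate_derivative_fpow_self (n : ℕ) :
    derivative^[2 * n] (fpow n) = C (((2 * n).factorial : ℝ)) := by
  have hmon : (X ^ 2 - 1 : Polynomial ℝ).Monic := by
    have h1 : (X ^ 2 - 1 : Polynomial ℝ) = X ^ 2 - C 1 := by simp
    rw [h1]
    exact monic_X_pow_sub_C 1 (by norm_num)
  have hdeg : (fpow n).natDegree = 2 * n := by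
    rw [fpow, natDegree_pow]
    have : (X ^ 2 - 1 : Polynomial ℝ).natDegree = 2 := by
      have h1 : (X ^ 2 - 1 : Polynomial ℝ) = X ^ 2 - C 1 := by simp
      rw [h1, natDegree_X_pow_sub_C]
    rw [this]
    ring
  have hle : (derivative^[2 * n] (fpow n)).natDegree ≤ 0 := by
    refine le_trans (natDegree_iterate_derivative _ _) ?_
    omega
  have := Polynomial.eq_C_of_natDegree_le_zero hle
  rw [this, coeff_iterate_derivative]
  norm_num
  rw [Nat.descFactorial_self, show (fpow n).coeff (2 * n) = (fpow n).leadingCoeff by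
    rw [leadingCoeff, hdeg], Monic.leadingCoeff (hmon.pow n)]
  simp

lemma legendre_diag (n : ℕ) :
    (∫ x in (-1:ℝ)..1, (legendre n).eval x * (legendre n).eval x)
      = 2 / (2 * (n : ℝ) + 1) := by
  have h : (∫ x in (-1:ℝ)..1, (legendre n).eval x * (legendre n).eval x)
      = cL n * ∫ x in (-1:ℝ)..1, (derivative^[n] (fpow n)).eval x * (legendre n).eval x := by
    rw [← intervalIntegral.integral_const_mul]
    congr 1
    ext x
    rw [legendre_eq, eval_mul, eval_C, mul_assoc]
  rw [h, ibp_iter_s16 n (legendre n) n le_rfl, Nat.sub_self]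
  have hd : derivative^[n] (legendre n) = C (cL n * ((2 * n).factorial : ℝ)) := by
    rw [legendre_eq, iterate_derivative_C_mul, ← Function.iterate_add_apply,
      show n + n = 2 * n by ring, iterate_derivative_fpow_self, ← C_mul]
  rw [hd]
  have h2 : (∫ x in (-1:ℝ)..1, (derivative^[0] (fpow n)).eval x
      * (C (cL n * ((2 * n).factorial : ℝ))).eval x)
      = (cL n * ((2 * n).factorial : ℝ)) * ∫ x in (-1:ℝ)..1, (fpow n).eval x := by
    rw [← intervalIntegral.integral_const_mul]
    congr 1
    ext x
    simp [mul_comm]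
  rw [h2, intf]
  rw [cL]
  have e1 : ((n.factorial : ℝ)) ≠ 0 := by exact_mod_cast n.factorial_ne_zero
  have e2 : ((2 * n + 1).factorial : ℝ) = (2 * (n:ℝ) + 1) * (((2*n).factorial : ℝ)) := by
    rw [Nat.factorial_succ]; push_cast; ring
  have e3 : ((2*n).factorial : ℝ) ≠ 0 := by exact_mod_cast (2*n).factorial_ne_zero
  have e4 : (2 * (n:ℝ) + 1) ≠ 0 := by positivity
  have e5 : (2:ℝ) ^ (2 * n + 1) = 2 * ((2:ℝ) ^ n * 2 ^ n) := by
    rw [show 2 * n + 1 = n + n + 1 by ring, pow_succ, pow_add]; ring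
  rw [e2, e5]
  have e6 : (2:ℝ) ^ n ≠ 0 := by positivity
  have e7 : ((-1:ℝ)) ^ n * ((-1:ℝ)) ^ n = 1 := by
    rw [← pow_add, show n + n = 2 * n by ring, pow_mul]
    norm_num
  field_simp
  linear_combination e7

lemma legendre_inner (m n : ℕ) :
    (∫ x in (-1:ℝ)..1, (legendre m).eval x * (legendre n).eval x)
      = if m = n then 2 / (2 * (m : ℝ) + 1) else 0 := by
  rcases lt_trichotomy m n with h | h | h
  · rw [if_neg h.ne]
    have : (∫ x in (-1:ℝ)..1, (legendre m).eval x * (legendre n).eval x)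
        = ∫ x in (-1:ℝ)..1, (legendre n).eval x * (legendre m).eval x := by
      congr 1; ext x; ring
    rw [this]
    exact int_legendre_mul_eq_zero (legendre m) (lt_of_le_of_lt (natDegree_legendre_le m) h)
  · subst h
    rw [if_pos rfl]
    exact legendre_diag m
  · rw [if_neg h.ne']
    exact int_legendre_mul_eq_zero (legendre n)
      (lt_of_le_of_lt (natDegree_legendre_le n) h)

/-- The weak Laplacian in the integrated Legendre basis is diagonal:
`∫_{−1}^{1} W_k'(x) W_j'(x) dx = 2/(2k+3) δ_{kj}`. -/
theorem bubble_weak_laplacian_diagonal (k j : ℕ) :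
    (∫ x in (-1 : ℝ)..1,
        (derivative (bubbleW k)).eval x * (derivative (bubbleW j)).eval x) =
      if k = j then 2 / (2 * (k : ℝ) + 3) else 0 := by
  rw [bubbleW_deriv k, bubbleW_deriv j]
  simp only [eval_neg, neg_mul_neg]
  rw [legendre_inner (k + 1) (j + 1)]
  by_cases h : k = j
  · rw [if_pos (by omega : k + 1 = j + 1), if_pos h]
    push_cast
    ring_nf
  · rw [if_neg (by omega : ¬ k + 1 = j + 1), if_neg h]
end

section
/- For all natural numbers k and j: ∫_{−1}^{1} W_k(x) P_j(x) dx = 2/((2k+3)(2k+1)) if j = k; ∫_{−1}^{1} W_k(x) P_j(x) dx = −2/((2k+3)(2k+5)) if j = k + 2; and ∫_{−1}^{1} W_k(x) P_j(x) dx = 0 otherwise. -/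
open Polynomial intervalIntegral MeasureTheory

namespace LegAux

noncomputable def f (k : ℕ) : Polynomial ℝ := (X ^ 2 - 1) ^ k

lemma pint (p q : Polynomial ℝ) :
    IntervalIntegrable (fun x => p.eval x * q.eval x) volume (-1) 1 :=
  (p.continuous.mul q.continuous).intervalIntegrable _ _

lemma iter_deriv_factor (k : ℕ) : ∀ m, m ≤ k → ∃ g : Polynomial ℝ,
    derivative^[m] (f k) = (X ^ 2 - 1) ^ (k - m) * g := by
  intro m
  induction m with
  | zero => exact fun _ => ⟨1, by simp [f]⟩
  | succ m ih =>
    intro hm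
    obtain ⟨g, hg⟩ := ih (le_of_lt (Nat.lt_of_succ_le hm))
    refine ⟨(((k - m : ℕ) : ℝ[X])) * derivative (X ^ 2 - 1) * g
        + (X ^ 2 - 1) * derivative g, ?_⟩
    rw [Function.iterate_succ_apply', hg, derivative_mul, derivative_pow]
    have e : k - m = k - (m + 1) + 1 := by omega
    rw [e]
    simp only [Nat.add_sub_cancel, ← C_eq_natCast]
    ring

lemma boundary_eval (k m : ℕ) (h : m < k) (x : ℝ) (hx : x ^ 2 = 1) :
    (derivative^[m] (f k)).eval x = 0 := by
  obtain ⟨g, hg⟩ := iter_deriv_factor k m h.le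
  rw [hg]
  have : k - m ≠ 0 := by omega
  simp [hx, zero_pow this]

lemma parts_once (p r : Polynomial ℝ) (h1 : p.eval 1 = 0) (h2 : p.eval (-1) = 0) :
    (∫ x in (-1 : ℝ)..1, (derivative p).eval x * r.eval x) =
      -∫ x in (-1 : ℝ)..1, p.eval x * (derivative r).eval x := by
  have key : (∫ x in (-1 : ℝ)..1,
      ((derivative p).eval x * r.eval x + p.eval x * (derivative r).eval x)) =
      p.eval 1 * r.eval 1 - p.eval (-1) * r.eval (-1) := by
    exact integral_deriv_mul_eq_sub (fun x _ => p.hasDerivAt x) (fun x _ => r.hasDerivAt x)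
      ((derivative p).continuous.intervalIntegrable _ _)
      ((derivative r).continuous.intervalIntegrable _ _)
  rw [intervalIntegral.integral_add (pint _ _) (pint _ _), h1, h2] at key
  linarith [key]

lemma parts_iter (k : ℕ) (q : Polynomial ℝ) : ∀ n, n ≤ k →
    (∫ x in (-1 : ℝ)..1, (derivative^[k] (f k)).eval x * q.eval x) =
      (-1 : ℝ) ^ n *
        ∫ x in (-1 : ℝ)..1, (derivative^[k - n] (f k)).eval x * (derivative^[n] q).eval x := by
  intro n
  induction n with
  | zero => simp
  | succ n ih =>
    intro hn
    rw [ih (le_of_lt (Nat.lt_of_succ_le hn))]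
    have h1 : k - n = (k - (n + 1)) + 1 := by omega
    have h2 : derivative^[k - n] (f k) = derivative (derivative^[k - (n + 1)] (f k)) := by
      rw [h1, Function.iterate_succ_apply']
    rw [h2, parts_once _ _
        (boundary_eval k _ (by omega) 1 (by norm_num))
        (boundary_eval k _ (by omega) (-1) (by norm_num))]
    rw [← Function.iterate_succ_apply' derivative n q]
    ring

lemma natDeg_f (k : ℕ) : (f k).natDegree = 2 * k := by
  have : (X ^ 2 - 1 : Polynomial ℝ) = X ^ 2 - C 1 := by simp
  rw [f, natDegree_pow, this, natDegree_X_pow_sub_C]; ring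

lemma coeff_f (k : ℕ) : (f k).coeff (2 * k) = 1 := by
  have hm : (X ^ 2 - 1 : Polynomial ℝ).Monic := by
    have : (X ^ 2 - 1 : Polynomial ℝ) = X ^ 2 - C 1 := by simp
    rw [this]; exact monic_X_pow_sub_C 1 (by norm_num)
  have hmf : (f k).Monic := hm.pow k
  have := hmf.coeff_natDegree
  rwa [natDeg_f k] at this

lemma top_deriv (k : ℕ) : derivative^[2 * k] (f k) = C (((2 * k).factorial : ℝ)) := by
  have h0 : (derivative^[2 * k] (f k)).natDegree = 0 := by
    have := natDegree_iterate_derivative (f k) (2 * k)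
    rw [natDeg_f] at this; omega
  rw [eq_C_of_natDegree_eq_zero h0, coeff_iterate_derivative]
  simp [coeff_f, Nat.descFactorial_self]

/-- The integral `J k = ∫ (1-x²)^k`. -/
lemma J_val (k : ℕ) : (∫ x in (-1 : ℝ)..1, (1 - x ^ 2) ^ k) =
    2 * 4 ^ k * (k.factorial : ℝ) ^ 2 / ((2 * k + 1).factorial : ℝ) := by
  induction k with
  | zero => simp; norm_num
  | succ k ih =>
    have hF : ∀ x : ℝ, HasDerivAt (fun y : ℝ => y * (1 - y ^ 2) ^ (k + 1))
        ((2 * k + 3) * (1 - x ^ 2) ^ (k + 1) - (2 * k + 2) * (1 - x ^ 2) ^ k) x := by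
      intro x
      have h1 : HasDerivAt (fun y : ℝ => 1 - y ^ 2) (-(2 * x)) x := by
        simpa using ((hasDerivAt_pow 2 x).const_sub 1)
      have h2 := h1.pow (k + 1)
      have h3 := (hasDerivAt_id x).mul h2
      simp only [id_eq, Nat.add_sub_cancel] at h3
      have h4 : HasDerivAt (fun y : ℝ => y * (1 - y ^ 2) ^ (k + 1)) _ x := h3
      convert h4 using 1
      simp only [Pi.pow_apply]
      push_cast
      ring
    have key : (∫ x in (-1 : ℝ)..1,
        ((2 * (k : ℝ) + 3) * (1 - x ^ 2) ^ (k + 1) - (2 * (k : ℝ) + 2) * (1 - x ^ 2) ^ k)) = 0 := by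
      rw [integral_eq_sub_of_hasDerivAt (fun x _ => hF x) ?_]
      · norm_num
      · apply Continuous.intervalIntegrable; continuity
    rw [intervalIntegral.integral_sub, intervalIntegral.integral_const_mul,
        intervalIntegral.integral_const_mul] at key
    · have h23 : (2 * (k : ℝ) + 3) ≠ 0 := by positivity
      have hrec : (∫ x in (-1 : ℝ)..1, (1 - x ^ 2) ^ (k + 1)) =
          (2 * (k : ℝ) + 2) / (2 * (k : ℝ) + 3) * ∫ x in (-1 : ℝ)..1, (1 - x ^ 2) ^ k := by
        field_simp
        linarith [key]
      rw [hrec, ih]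
      have hf1 : ((2 * (k + 1) + 1).factorial : ℝ) =
          (2 * (k : ℝ) + 3) * ((2 * (k : ℝ) + 2) * ((2 * k + 1).factorial : ℝ)) := by
        have e : 2 * (k + 1) + 1 = ((2 * k + 1) + 1) + 1 := by ring
        rw [e, Nat.factorial_succ, Nat.factorial_succ]
        push_cast; ring
      rw [hf1]
      have hfk : ((2 * k + 1).factorial : ℝ) ≠ 0 := by positivity
      have h22 : (2 * (k : ℝ) + 2) ≠ 0 := by positivity
      field_simp
      push_cast [Nat.factorial_succ]
      ring
    · apply Continuous.intervalIntegrable; continuity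
    · apply Continuous.intervalIntegrable; continuity

lemma int_f (k : ℕ) : (∫ x in (-1 : ℝ)..1, (f k).eval x) =
    (-1 : ℝ) ^ k * (2 * 4 ^ k * (k.factorial : ℝ) ^ 2 / ((2 * k + 1).factorial : ℝ)) := by
  have : ∀ x : ℝ, (f k).eval x = (-1 : ℝ) ^ k * (1 - x ^ 2) ^ k := by
    intro x
    simp only [f, eval_pow, eval_sub, eval_one, eval_X]
    rw [show (x ^ 2 - 1 : ℝ) = -(1 - x ^ 2) by ring, neg_pow]
  simp only [this]
  rw [intervalIntegral.integral_const_mul, J_val]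

/-- inner product of legendre polynomials -/
noncomputable def I (k j : ℕ) : ℝ := ∫ x in (-1 : ℝ)..1, (legendre k).eval x * (legendre j).eval x

lemma I_symm (k j : ℕ) : I k j = I j k := by
  unfold I; simp_rw [mul_comm]

lemma legendre_eval (k : ℕ) (x : ℝ) :
    (legendre k).eval x = (1 / (2 ^ k * (k.factorial : ℝ))) * (derivative^[k] (f k)).eval x := by
  simp [legendre, f]

lemma I_zero_of_lt {k j : ℕ} (h : j < k) : I k j = 0 := by
  unfold I
  have hx : ∀ x : ℝ, (legendre k).eval x * (legendre j).eval x =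
      (1 / (2 ^ k * (k.factorial : ℝ))) *
        ((derivative^[k] (f k)).eval x * (legendre j).eval x) := by
    intro x; rw [legendre_eval]; ring
  simp_rw [hx]
  rw [intervalIntegral.integral_const_mul, parts_iter k (legendre j) k le_rfl]
  have hz : derivative^[k] (legendre j) = 0 := by
    rw [legendre, iterate_derivative_C_mul, ← Function.iterate_add_apply]
    have : derivative^[k + j] ((X ^ 2 - 1 : Polynomial ℝ) ^ j) = 0 := by
      apply iterate_derivative_eq_zero
      rw [← f, natDeg_f]; omega
    rw [this, mul_zero]
  rw [hz]
  simp

lemma I_self (k : ℕ) : I k k = 2 / (2 * (k : ℝ) + 1) := by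
  unfold I
  set c : ℝ := 1 / (2 ^ k * (k.factorial : ℝ)) with hc
  have hx : ∀ x : ℝ, (legendre k).eval x * (legendre k).eval x =
      (c * c) * ((derivative^[k] (f k)).eval x * (derivative^[k] (f k)).eval x) := by
    intro x; rw [legendre_eval]; ring
  simp_rw [hx]
  rw [intervalIntegral.integral_const_mul, parts_iter k (derivative^[k] (f k)) k le_rfl]
  have htop : derivative^[k] (derivative^[k] (f k)) = C (((2 * k).factorial : ℝ)) := by
    rw [← Function.iterate_add_apply]
    rw [show k + k = 2 * k by ring, top_deriv]
  rw [htop]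
  simp only [Nat.sub_self, Function.iterate_zero, id_eq, eval_C]
  simp_rw [show ∀ x : ℝ, (f k).eval x * ((2 * k).factorial : ℝ) =
      ((2 * k).factorial : ℝ) * (f k).eval x from fun x => mul_comm _ _]
  rw [intervalIntegral.integral_const_mul, int_f]
  have hm1 : ((-1 : ℝ) ^ k) * ((-1 : ℝ) ^ k) = 1 := by
    rw [← pow_add]; exact Even.neg_one_pow ⟨k, rfl⟩
  have hfact : ((2 * k + 1).factorial : ℝ) = (2 * (k : ℝ) + 1) * ((2 * k).factorial : ℝ) := by
    rw [Nat.factorial_succ]; push_cast; ring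
  have h4 : (4 : ℝ) ^ k = 2 ^ k * 2 ^ k := by
    rw [show (4 : ℝ) = 2 * 2 by norm_num, mul_pow]
  have hne1 : ((2 * k).factorial : ℝ) ≠ 0 := by positivity
  have hne2 : (k.factorial : ℝ) ≠ 0 := by positivity
  have hne3 : (2 * (k : ℝ) + 1) ≠ 0 := by positivity
  have hne4 : (2 : ℝ) ^ k ≠ 0 := by positivity
  have expand : c * c * ((-1 : ℝ) ^ k * (((2 * k).factorial : ℝ) *
      ((-1 : ℝ) ^ k * (2 * 4 ^ k * (k.factorial : ℝ) ^ 2 / ((2 * k + 1).factorial : ℝ))))) =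
      ((-1 : ℝ) ^ k * (-1 : ℝ) ^ k) * (c * c * (((2 * k).factorial : ℝ) *
      (2 * 4 ^ k * (k.factorial : ℝ) ^ 2 / ((2 * k + 1).factorial : ℝ)))) := by ring
  rw [expand, hm1, one_mul, hc, hfact, h4]
  field_simp

lemma I_eq (k j : ℕ) : I k j = if j = k then 2 / (2 * (k : ℝ) + 1) else 0 := by
  rcases lt_trichotomy j k with h | h | h
  · rw [if_neg h.ne, I_zero_of_lt h]
  · rw [h, if_pos rfl, I_self]
  · rw [if_neg h.ne', I_symm, I_zero_of_lt h]

end LegAux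

open LegAux

/-- The inner products of the integrated Legendre functions with the
Legendre polynomials: `∫ W_k P_j = 2/((2k+3)(2k+1))` if `j = k`,
`∫ W_k P_j = −2/((2k+3)(2k+5))` if `j = k+2`, and `∫ W_k P_j = 0` otherwise. -/
theorem bubble_legendre_inner_products (k j : ℕ) :
    (j = k → (∫ x in (-1 : ℝ)..1, (bubbleW k).eval x * (legendre j).eval x) =
        2 / ((2 * (k : ℝ) + 3) * (2 * (k : ℝ) + 1))) ∧
    (j = k + 2 → (∫ x in (-1 : ℝ)..1, (bubbleW k).eval x * (legendre j).eval x) =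
        -2 / ((2 * (k : ℝ) + 3) * (2 * (k : ℝ) + 5))) ∧
    (j ≠ k → j ≠ k + 2 →
      (∫ x in (-1 : ℝ)..1, (bubbleW k).eval x * (legendre j).eval x) = 0) := by
  have hsplit : (∫ x in (-1 : ℝ)..1, (bubbleW k).eval x * (legendre j).eval x) =
      (1 / (2 * (k : ℝ) + 3)) * (I k j - I (k + 2) j) := by
    unfold bubbleW I
    have hx : ∀ x : ℝ, (C (1 / (2 * (k : ℝ) + 3)) *
        (legendre k - legendre (k + 2))).eval x * (legendre j).eval x =
        (1 / (2 * (k : ℝ) + 3)) * ((legendre k).eval x * (legendre j).eval x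
          - (legendre (k + 2)).eval x * (legendre j).eval x) := by
      intro x; simp only [eval_mul, eval_C, eval_sub]; ring
    simp_rw [hx]
    rw [intervalIntegral.integral_const_mul,
      intervalIntegral.integral_sub (pint _ _) (pint _ _)]
  have h3 : (2 * (k : ℝ) + 3) ≠ 0 := by positivity
  refine ⟨?_, ?_, ?_⟩
  · intro hjk
    rw [hsplit, I_eq, I_eq, if_pos hjk, if_neg (by omega)]
    have h1 : (2 * (k : ℝ) + 1) ≠ 0 := by positivity
    field_simp
    ring
  · intro hjk
    rw [hsplit, I_eq, I_eq, if_neg (by omega), if_pos hjk]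
    have h5 : (2 * (k : ℝ) + 5) ≠ 0 := by positivity
    push_cast
    rw [show (2 * ((k : ℝ) + 2) + 1) = 2 * (k : ℝ) + 5 by ring]
    field_simp
    ring
  · intro h1 h2
    rw [hsplit, I_eq, I_eq, if_neg h1, if_neg h2]
    simp
end
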